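/- arXiv:2010.01834 — 9 statements merged into one kernel-verified Lean document; each statement's English description precedes it below -/
import Mathlib

section
/- Let T > 0, L > 0 and m ∈ ℕ. Let a, v : [0,T] × [0,L] → ℝ, b₀, b_L : [0,T] → ℝ and g₀, g_L : [0,T] → ℝ^m be continuous, and let h ∈ ℝ^m. Let w, φ : [0,T] × [0,L] → ℝ be continuous functions such that: ∂_t w and ∂_t φ exist and are continuous on [0,T] × [0,L]; the function ψ(t,x) := a(t,x) w(t,x) has continuous partial derivatives ∂_x ψ and ∂_{xx} ψ on [0,T] × [0,L]; and φ has continuous partial derivatives ∂_x φ and ∂_{xx} φ on [0,T] × [0,L]. Suppose that for all (t,x) ∈ [0,T] × [0,L]: (1) ∂_t w(t,x) = ∂_{xx} ψ(t,x); (2) ∂_x ψ(t,0) = b₀(t) w(t,0) + g₀(t)·h and −∂_x ψ(t,L) = b_L(t) w(t,L) + g_L(t)·h; (3) w(0,x) = 0; (4) ∂_t φ(t,x) = −a(t,x) ∂_{xx} φ(t,x) − v(t,x); (5) a(t,0) ∂_x φ(t,0) = b₀(t) φ(t,0) and −a(t,L) ∂_x φ(t,L) = b_L(t) φ(t,L);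 (6) φ(T,x) = 0. Then ∫₀ᵀ ∫₀ᴸ w(t,x) v(t,x) dx dt = h · ∫₀ᵀ ( −g₀(t) φ(t,0) − g_L(t) φ(t,L) ) dt, where the last integral of the ℝ^m-valued integrand is taken componentwise. -/
open Set MeasureTheory

/-- FTC on a closed interval with derivatives within the interval. -/
lemma ftc_Icc {A B : ℝ} (hAB : A ≤ B) (f f' : ℝ → ℝ)
    (hd : ∀ x ∈ Icc A B, HasDerivWithinAt f (f' x) (Icc A B) x)
    (hc : ContinuousOn f' (Icc A B)) :
    ∫ x in A..B, f' x = f B - f A := by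
  apply intervalIntegral.integral_eq_sub_of_hasDeriv_right_of_le hAB
  · exact fun x hx => (hd x hx).continuousWithinAt
  · intro x hx
    exact ((hd x (Ioo_subset_Icc_self hx)).hasDerivAt
      (Icc_mem_nhds hx.1 hx.2)).hasDerivWithinAt
  · exact ContinuousOn.intervalIntegrable (by rwa [Set.uIcc_of_le hAB])

/-- Integration by parts on a closed interval. -/
lemma ibp_Icc {A B : ℝ} (hAB : A ≤ B) (f g f' g' : ℝ → ℝ)
    (hf : ∀ x ∈ Icc A B, HasDerivWithinAt f (f' x) (Icc A B) x)
    (hg : ∀ x ∈ Icc A B, HasDerivWithinAt g (g' x) (Icc A B) x)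
    (hf' : ContinuousOn f' (Icc A B)) (hg' : ContinuousOn g' (Icc A B)) :
    ∫ x in A..B, (f' x * g x + f x * g' x) = f B * g B - f A * g A := by
  have hfc : ContinuousOn f (Icc A B) := fun x hx => (hf x hx).continuousWithinAt
  have hgc : ContinuousOn g (Icc A B) := fun x hx => (hg x hx).continuousWithinAt
  exact ftc_Icc hAB (fun x => f x * g x) _
    (fun x hx => (hf x hx).mul (hg x hx)) ((hf'.mul hgc).add (hfc.mul hg'))

/-- Fubini for continuous functions on a rectangle, in interval-integral form. -/
lemma fubini_rect {T L : ℝ} (hT : 0 ≤ T) (hL : 0 ≤ L) (F : ℝ → ℝ → ℝ)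
    (hF : ContinuousOn (fun q : ℝ × ℝ => F q.1 q.2) (Icc 0 T ×ˢ Icc 0 L)) :
    ∫ t in (0:ℝ)..T, ∫ x in (0:ℝ)..L, F t x
      = ∫ x in (0:ℝ)..L, ∫ t in (0:ℝ)..T, F t x := by
  have hint : Integrable (Function.uncurry F)
      ((volume.restrict (Ioc 0 T)).prod (volume.restrict (Ioc 0 L))) := by
    rw [Measure.prod_restrict]
    exact (hF.integrableOn_compact (isCompact_Icc.prod isCompact_Icc)).mono_set
      (prod_mono Ioc_subset_Icc_self Ioc_subset_Icc_self)
  have := MeasureTheory.integral_integral_swap hint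
  simpa [intervalIntegral.integral_of_le hT, intervalIntegral.integral_of_le hL] using this

/-- Adjoint-state identity: if `w` solves the linearized sensitivity problem with
diffusivity `a`, boundary coefficients `b₀, b_L` and inhomogeneities `g₀·h, g_L·h`,
and `φ` solves the backward adjoint problem with source `v` and terminal condition
`φ(T,·) = 0`, then `∫₀ᵀ∫₀ᴸ w v = h · ∫₀ᵀ (−g₀ φ(·,0) − g_L φ(·,L))`. -/
theorem stmt_1 (T L : ℝ) (hT : 0 < T) (hL : 0 < L) (m : ℕ)
    (a v : ℝ → ℝ → ℝ) (b₀ bL : ℝ → ℝ) (g₀ gL : ℝ → Fin m → ℝ) (h : Fin m → ℝ)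
    (ha : ContinuousOn (fun q : ℝ × ℝ => a q.1 q.2) (Icc 0 T ×ˢ Icc 0 L))
    (hv : ContinuousOn (fun q : ℝ × ℝ => v q.1 q.2) (Icc 0 T ×ˢ Icc 0 L))
    (hb₀ : ContinuousOn b₀ (Icc 0 T)) (hbL : ContinuousOn bL (Icc 0 T))
    (hg₀ : ∀ i : Fin m, ContinuousOn (fun t => g₀ t i) (Icc 0 T))
    (hgL : ∀ i : Fin m, ContinuousOn (fun t => gL t i) (Icc 0 T))
    (w φ : ℝ → ℝ → ℝ)
    (hwc : ContinuousOn (fun q : ℝ × ℝ => w q.1 q.2) (Icc 0 T ×ˢ Icc 0 L))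
    (hφc : ContinuousOn (fun q : ℝ × ℝ => φ q.1 q.2) (Icc 0 T ×ˢ Icc 0 L))
    (wt φt ψx ψxx φx φxx : ℝ → ℝ → ℝ)
    -- existence of the derivatives on the closed rectangle
    (hwt : ∀ t ∈ Icc (0:ℝ) T, ∀ x ∈ Icc (0:ℝ) L,
      HasDerivWithinAt (fun s => w s x) (wt t x) (Icc 0 T) t)
    (hφt : ∀ t ∈ Icc (0:ℝ) T, ∀ x ∈ Icc (0:ℝ) L,
      HasDerivWithinAt (fun s => φ s x) (φt t x) (Icc 0 T) t)
    (hψx : ∀ t ∈ Icc (0:ℝ) T, ∀ x ∈ Icc (0:ℝ) L,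
      HasDerivWithinAt (fun y => a t y * w t y) (ψx t x) (Icc 0 L) x)
    (hψxx : ∀ t ∈ Icc (0:ℝ) T, ∀ x ∈ Icc (0:ℝ) L,
      HasDerivWithinAt (fun y => ψx t y) (ψxx t x) (Icc 0 L) x)
    (hφx : ∀ t ∈ Icc (0:ℝ) T, ∀ x ∈ Icc (0:ℝ) L,
      HasDerivWithinAt (fun y => φ t y) (φx t x) (Icc 0 L) x)
    (hφxx : ∀ t ∈ Icc (0:ℝ) T, ∀ x ∈ Icc (0:ℝ) L,
      HasDerivWithinAt (fun y => φx t y) (φxx t x) (Icc 0 L) x)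
    -- continuity of the derivatives on the closed rectangle
    (hwtc : ContinuousOn (fun q : ℝ × ℝ => wt q.1 q.2) (Icc 0 T ×ˢ Icc 0 L))
    (hφtc : ContinuousOn (fun q : ℝ × ℝ => φt q.1 q.2) (Icc 0 T ×ˢ Icc 0 L))
    (hψxc : ContinuousOn (fun q : ℝ × ℝ => ψx q.1 q.2) (Icc 0 T ×ˢ Icc 0 L))
    (hψxxc : ContinuousOn (fun q : ℝ × ℝ => ψxx q.1 q.2) (Icc 0 T ×ˢ Icc 0 L))
    (hφxc : ContinuousOn (fun q : ℝ × ℝ => φx q.1 q.2) (Icc 0 T ×ˢ Icc 0 L))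
    (hφxxc : ContinuousOn (fun q : ℝ × ℝ => φxx q.1 q.2) (Icc 0 T ×ˢ Icc 0 L))
    -- (1) the linearized evolution equation
    (heq1 : ∀ t ∈ Icc (0:ℝ) T, ∀ x ∈ Icc (0:ℝ) L, wt t x = ψxx t x)
    -- (2) the linearized boundary conditions
    (heq2a : ∀ t ∈ Icc (0:ℝ) T, ψx t 0 = b₀ t * w t 0 + ∑ i, g₀ t i * h i)
    (heq2b : ∀ t ∈ Icc (0:ℝ) T, -ψx t L = bL t * w t L + ∑ i, gL t i * h i)
    -- (3) the homogeneous initial condition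
    (heq3 : ∀ x ∈ Icc (0:ℝ) L, w 0 x = 0)
    -- (4) the backward adjoint equation
    (heq4 : ∀ t ∈ Icc (0:ℝ) T, ∀ x ∈ Icc (0:ℝ) L,
      φt t x = -(a t x * φxx t x) - v t x)
    -- (5) the adjoint boundary conditions
    (heq5a : ∀ t ∈ Icc (0:ℝ) T, a t 0 * φx t 0 = b₀ t * φ t 0)
    (heq5b : ∀ t ∈ Icc (0:ℝ) T, -(a t L * φx t L) = bL t * φ t L)
    -- (6) the terminal condition
    (heq6 : ∀ x ∈ Icc (0:ℝ) L, φ T x = 0) :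
    (∫ t in (0:ℝ)..T, ∫ x in (0:ℝ)..L, w t x * v t x) =
      ∑ i, h i * ∫ t in (0:ℝ)..T, (-(g₀ t i * φ t 0) - gL t i * φ t L) := by
  have hx0 : (0:ℝ) ∈ Icc (0:ℝ) L := ⟨le_refl _, hL.le⟩
  have hxL : L ∈ Icc (0:ℝ) L := ⟨hL.le, le_refl _⟩
  -- slicing continuous functions
  have sliceX : ∀ (F : ℝ → ℝ → ℝ),
      ContinuousOn (fun q : ℝ × ℝ => F q.1 q.2) (Icc 0 T ×ˢ Icc 0 L) →
      ∀ t ∈ Icc (0:ℝ) T, ContinuousOn (fun x => F t x) (Icc 0 L) := by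
    intro F hF t ht
    exact hF.comp ((continuous_const.prodMk continuous_id).continuousOn)
      (fun x hx => Set.mk_mem_prod ht hx)
  have sliceT : ∀ (F : ℝ → ℝ → ℝ),
      ContinuousOn (fun q : ℝ × ℝ => F q.1 q.2) (Icc 0 T ×ˢ Icc 0 L) →
      ∀ x ∈ Icc (0:ℝ) L, ContinuousOn (fun t => F t x) (Icc 0 T) := by
    intro F hF x hx
    exact hF.comp ((continuous_id.prodMk continuous_const).continuousOn)
      (fun t ht => Set.mk_mem_prod ht hx)
  have intL : ∀ (f : ℝ → ℝ), ContinuousOn f (Icc 0 L) →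
      IntervalIntegrable f volume 0 L := fun f hf =>
    ContinuousOn.intervalIntegrable (by rwa [Set.uIcc_of_le hL.le])
  have intT : ∀ (f : ℝ → ℝ), ContinuousOn f (Icc 0 T) →
      IntervalIntegrable f volume 0 T := fun f hf =>
    ContinuousOn.intervalIntegrable (by rwa [Set.uIcc_of_le hT.le])
  set S : ℝ → ℝ → ℝ :=
    fun t x => wt t x * φ t x + w t x * φt t x + w t x * v t x with hS
  have hSc : ContinuousOn (fun q : ℝ × ℝ => S q.1 q.2) (Icc 0 T ×ˢ Icc 0 L) :=
    ((hwtc.mul hφc).add (hwc.mul hφtc)).add (hwc.mul hv)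
  -- Step 1: for each t, the space integral of S equals the boundary term.
  have key_t : ∀ t ∈ Icc (0:ℝ) T, ∫ x in (0:ℝ)..L, S t x =
      -((∑ i, g₀ t i * h i) * φ t 0) - (∑ i, gL t i * h i) * φ t L := by
    intro t ht
    have ibp1 := ibp_Icc hL.le (fun x => ψx t x) (fun x => φ t x)
      (fun x => ψxx t x) (fun x => φx t x) (hψxx t ht) (hφx t ht)
      (sliceX _ hψxxc t ht) (sliceX _ hφxc t ht)
    have ibp2 := ibp_Icc hL.le (fun x => a t x * w t x) (fun x => φx t x)
      (fun x => ψx t x) (fun x => φxx t x) (hψx t ht) (hφxx t ht)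
      (sliceX _ hψxc t ht) (sliceX _ hφxxc t ht)
    have hcongr : EqOn (fun x => S t x)
        (fun x => (ψxx t x * φ t x + ψx t x * φx t x)
          - (ψx t x * φx t x + (a t x * w t x) * φxx t x)) (uIcc 0 L) := by
      rw [Set.uIcc_of_le hL.le]
      intro x hx
      have e1 := heq1 t ht x hx
      have e4 := heq4 t ht x hx
      simp only [hS]
      rw [e1, e4]; ring
    have hint1 : IntervalIntegrable
        (fun x => ψxx t x * φ t x + ψx t x * φx t x) volume 0 L :=
      intL _ (((sliceX _ hψxxc t ht).mul (sliceX _ hφc t ht)).add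
        ((sliceX _ hψxc t ht).mul (sliceX _ hφxc t ht)))
    have hint2 : IntervalIntegrable
        (fun x => ψx t x * φx t x + (a t x * w t x) * φxx t x) volume 0 L :=
      intL _ (((sliceX _ hψxc t ht).mul (sliceX _ hφxc t ht)).add
        (((sliceX _ ha t ht).mul (sliceX _ hwc t ht)).mul (sliceX _ hφxxc t ht)))
    rw [intervalIntegral.integral_congr hcongr,
      intervalIntegral.integral_sub hint1 hint2, ibp1, ibp2]
    have e2a := heq2a t ht
    have e2b := heq2b t ht
    have e5a := heq5a t ht
    have e5b := heq5b t ht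
    linear_combination (-(φ t L)) * e2b - φ t 0 * e2a + w t 0 * e5a + w t L * e5b
  -- Step 2: for each x, the time integral of S equals the time integral of w*v.
  have key_x : ∀ x ∈ Icc (0:ℝ) L, ∫ t in (0:ℝ)..T, S t x =
      ∫ t in (0:ℝ)..T, w t x * v t x := by
    intro x hx
    have hintP : IntervalIntegrable
        (fun t => wt t x * φ t x + w t x * φt t x) volume 0 T :=
      intT _ (((sliceT _ hwtc x hx).mul (sliceT _ hφc x hx)).add
        ((sliceT _ hwc x hx).mul (sliceT _ hφtc x hx)))
    have hintV : IntervalIntegrable (fun t => w t x * v t x) volume 0 T :=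
      intT _ ((sliceT _ hwc x hx).mul (sliceT _ hv x hx))
    have hP : ∫ t in (0:ℝ)..T, (wt t x * φ t x + w t x * φt t x) = 0 := by
      have := ftc_Icc hT.le (fun t => w t x * φ t x)
        (fun t => wt t x * φ t x + w t x * φt t x)
        (fun t ht => (hwt t ht x hx).mul (hφt t ht x hx))
        (((sliceT _ hwtc x hx).mul (sliceT _ hφc x hx)).add
          ((sliceT _ hwc x hx).mul (sliceT _ hφtc x hx)))
      rw [this]
      show w T x * φ T x - w 0 x * φ 0 x = 0
      rw [heq6 x hx, heq3 x hx]; ring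
    calc ∫ t in (0:ℝ)..T, S t x
        = ∫ t in (0:ℝ)..T, ((wt t x * φ t x + w t x * φt t x) + w t x * v t x) := rfl
      _ = (∫ t in (0:ℝ)..T, (wt t x * φ t x + w t x * φt t x))
            + ∫ t in (0:ℝ)..T, w t x * v t x :=
          intervalIntegral.integral_add hintP hintV
      _ = ∫ t in (0:ℝ)..T, w t x * v t x := by rw [hP, zero_add]
  -- Step 3: assemble via Fubini.
  have fub1 := fubini_rect hT.le hL.le S hSc
  have fub2 := fubini_rect hT.le hL.le (fun t x => w t x * v t x) (hwc.mul hv)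
  have hwv_eq : ∫ t in (0:ℝ)..T, ∫ x in (0:ℝ)..L, w t x * v t x
      = ∫ t in (0:ℝ)..T, ∫ x in (0:ℝ)..L, S t x := by
    rw [fub2, fub1]
    apply intervalIntegral.integral_congr
    intro x hx
    rw [Set.uIcc_of_le hL.le] at hx
    exact (key_x x hx).symm
  rw [hwv_eq]
  have : ∫ t in (0:ℝ)..T, ∫ x in (0:ℝ)..L, S t x
      = ∫ t in (0:ℝ)..T, ∑ i, h i * (-(g₀ t i * φ t 0) - gL t i * φ t L) := by
    apply intervalIntegral.integral_congr
    intro t ht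
    rw [Set.uIcc_of_le hT.le] at ht
    show (∫ x in (0:ℝ)..L, S t x) = ∑ i, h i * (-(g₀ t i * φ t 0) - gL t i * φ t L)
    rw [key_t t ht, Finset.sum_mul, Finset.sum_mul, ← Finset.sum_neg_distrib,
      ← Finset.sum_sub_distrib]
    apply Finset.sum_congr rfl
    intro i _
    ring
  rw [this, intervalIntegral.integral_finset_sum]
  · apply Finset.sum_congr rfl
    intro i _
    exact intervalIntegral.integral_const_mul _ _
  · intro i _
    apply IntervalIntegrable.const_mul
    apply intT
    exact (((hg₀ i).mul (sliceT _ hφc 0 hx0)).neg).sub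
      ((hgL i).mul (sliceT _ hφc L hxL))
end

section
/- Let V be a real reflexive Banach space with continuous dual V* and duality pairing ⟨·,·⟩, and let A, B : V → V* be two pseudomonotone maps. Then the sum A + B (defined by (A+B)(u) = A(u) + B(u)) is pseudomonotone: it maps norm-bounded sets to norm-bounded sets, and whenever u_k ⇀ u weakly in V and limsup_{k→∞} ⟨A(u_k) + B(u_k), u_k − u⟩ ≤ 0, it follows that ⟨A(u) + B(u), u − v⟩ ≤ liminf_{k→∞} ⟨A(u_k) + B(u_k), u_k − v⟩ for every v ∈ V. -/
open Filter

/-- A map `A : V → V*` is pseudomonotone if it maps bounded sets to bounded sets and,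
whenever `u_k ⇀ u₀` weakly and `limsup ⟨A(u_k), u_k − u₀⟩ ≤ 0`, one has
`⟨A(u₀), u₀ − v⟩ ≤ liminf ⟨A(u_k), u_k − v⟩` for all `v`. -/
def Pseudomonotone {V : Type*} [NormedAddCommGroup V] [NormedSpace ℝ V]
    (A : V → StrongDual ℝ V) : Prop :=
  (∀ s : Set V, Bornology.IsBounded s → Bornology.IsBounded (A '' s)) ∧
  ∀ (u : ℕ → V) (u₀ : V),
    (∀ f : StrongDual ℝ V, Tendsto (fun k => f (u k)) atTop (nhds (f u₀))) →
    limsup (fun k => A (u k) (u k - u₀)) atTop ≤ 0 →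
    ∀ v : V, A u₀ (u₀ - v) ≤ liminf (fun k => A (u k) (u k - v)) atTop

/-- A bounded real sequence has a subsequence tending to its limsup. -/
lemma exists_subseq_tendsto_limsup' {a : ℕ → ℝ} {K : ℝ} (hK : ∀ k, |a k| ≤ K) :
    ∃ φ : ℕ → ℕ, StrictMono φ ∧ Tendsto (a ∘ φ) atTop (nhds (limsup a atTop)) := by
  have hle : IsBoundedUnder (· ≤ ·) atTop a :=
    isBoundedUnder_of ⟨K, fun k => (abs_le.1 (hK k)).2⟩
  have hge : IsBoundedUnder (· ≥ ·) atTop a :=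
    isBoundedUnder_of ⟨-K, fun k => (abs_le.1 (hK k)).1⟩
  have hcp : MapClusterPt (limsup a atTop) atTop a := by
    rw [(nhds_basis_Ioo_pos _).mapClusterPt_iff_frequently]
    intro ε hε
    have h1 : ∀ᶠ k in atTop, a k < limsup a atTop + ε :=
      eventually_lt_of_limsup_lt (lt_add_of_pos_right _ hε) hle
    have h2 : ∃ᶠ k in atTop, limsup a atTop - ε < a k :=
      frequently_lt_of_lt_limsup hge.isCoboundedUnder_le (sub_lt_self _ hε)
    exact (h2.and_eventually h1).mono fun k hk => ⟨hk.1, hk.2⟩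
  exact TopologicalSpace.FirstCountableTopology.tendsto_subseq hcp

/-- A weakly convergent sequence is norm bounded (Banach–Steinhaus). -/
lemma weak_conv_bdd {V : Type*} [NormedAddCommGroup V] [NormedSpace ℝ V]
    (u : ℕ → V) (u₀ : V)
    (hw : ∀ f : StrongDual ℝ V, Tendsto (fun k => f (u k)) atTop (nhds (f u₀))) :
    ∃ M : ℝ, 0 ≤ M ∧ ∀ k, ‖u k‖ ≤ M := by
  have hpt : ∀ f : StrongDual ℝ V,
      ∃ C, ∀ k, ‖NormedSpace.inclusionInDoubleDual ℝ V (u k) f‖ ≤ C := by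
    intro f
    have ht : Tendsto (fun k => ‖f (u k)‖) atTop (nhds ‖f u₀‖) := (hw f).norm
    obtain ⟨C, hC⟩ := ht.bddAbove_range
    exact ⟨C, fun k => hC (Set.mem_range_self k)⟩
  obtain ⟨C', hC'⟩ :=
    banach_steinhaus (g := fun k => NormedSpace.inclusionInDoubleDual ℝ V (u k)) hpt
  refine ⟨max C' 0, le_max_right _ _, fun k => ?_⟩
  apply NormedSpace.norm_le_dual_bound ℝ (u k) (le_max_right _ _)
  intro f
  calc ‖f (u k)‖ = ‖(NormedSpace.inclusionInDoubleDual ℝ V (u k)) f‖ := rfl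
    _ ≤ ‖NormedSpace.inclusionInDoubleDual ℝ V (u k)‖ * ‖f‖ :=
        ContinuousLinearMap.le_opNorm _ _
    _ ≤ max C' 0 * ‖f‖ :=
        mul_le_mul_of_nonneg_right ((hC' k).trans (le_max_left _ _)) (norm_nonneg f)

/-- Key subsequence argument: if `b k = ⟨B(u_k), u_k - u₀⟩` for a pseudomonotone `B`,
`u_k ⇀ u₀`, both `a` and `b` are bounded, and `limsup (a + b) ≤ 0`, then `limsup a ≤ 0`. -/
lemma limsup_part_nonpos {V : Type*} [NormedAddCommGroup V] [NormedSpace ℝ V]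
    (B : V → StrongDual ℝ V) (hB : Pseudomonotone B)
    (u : ℕ → V) (u₀ : V)
    (hw : ∀ f : StrongDual ℝ V, Tendsto (fun k => f (u k)) atTop (nhds (f u₀)))
    (a b : ℕ → ℝ) (hb : ∀ k, b k = B (u k) (u k - u₀))
    (Ka Kb : ℝ) (haK : ∀ k, |a k| ≤ Ka) (hbK : ∀ k, |b k| ≤ Kb)
    (hsum : limsup (a + b) atTop ≤ 0) :
    limsup a atTop ≤ 0 := by
  by_contra hpos
  push_neg at hpos
  set L := limsup a atTop with hL
  obtain ⟨φ, hφ, hφt⟩ := exists_subseq_tendsto_limsup' haK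
  have hφat : Tendsto φ atTop atTop := hφ.tendsto_atTop
  haveI : (Filter.map φ atTop).NeBot := map_neBot
  -- boundedness facts for the composed sequences
  have hbφle : IsBoundedUnder (· ≤ ·) atTop (b ∘ φ) :=
    isBoundedUnder_of ⟨Kb, fun j => (abs_le.1 (hbK (φ j))).2⟩
  have hbφge : IsBoundedUnder (· ≥ ·) atTop (b ∘ φ) :=
    isBoundedUnder_of ⟨-Kb, fun j => (abs_le.1 (hbK (φ j))).1⟩
  have haφle : IsBoundedUnder (· ≤ ·) atTop (a ∘ φ) :=
    isBoundedUnder_of ⟨Ka, fun j => (abs_le.1 (haK (φ j))).2⟩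
  have haφge : IsBoundedUnder (· ≥ ·) atTop (a ∘ φ) :=
    isBoundedUnder_of ⟨-Ka, fun j => (abs_le.1 (haK (φ j))).1⟩
  -- the limsup of (a+b) along the subsequence is still ≤ 0
  have hsumφ : limsup ((a + b) ∘ φ) atTop ≤ 0 := by
    have hco : IsCoboundedUnder (· ≤ ·) (Filter.map φ atTop) (a + b) := by
      refine IsBoundedUnder.isCoboundedUnder_le ?_
      exact isBoundedUnder_of ⟨-(Ka + Kb), fun k => by
        have := (abs_le.1 (haK k)).1
        have := (abs_le.1 (hbK k)).1
        simp only [Pi.add_apply]; linarith⟩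
    have hbd : IsBoundedUnder (· ≤ ·) atTop (a + b) :=
      isBoundedUnder_of ⟨Ka + Kb, fun k => by
        have := (abs_le.1 (haK k)).2
        have := (abs_le.1 (hbK k)).2
        simp only [Pi.add_apply]; linarith⟩
    calc limsup ((a + b) ∘ φ) atTop = limsup (a + b) (Filter.map φ atTop) :=
          limsup_comp _ _ _
      _ ≤ limsup (a + b) atTop := limsup_le_limsup_of_le hφat hco hbd
      _ ≤ 0 := hsum
  -- liminf of a ∘ φ equals L
  have hliminf : liminf (a ∘ φ) atTop = L := hφt.liminf_eq
  -- limsup (b ∘ φ) ≤ -L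
  have h2 : limsup (b ∘ φ) atTop ≤ -L := by
    have hadd : limsup (b ∘ φ) atTop + liminf (a ∘ φ) atTop ≤
        limsup (b ∘ φ + a ∘ φ) atTop :=
      le_limsup_add hbφle hbφge.isCoboundedUnder_le haφle haφge
    have heq : (b ∘ φ + a ∘ φ) = (a + b) ∘ φ := by
      funext j; simp [add_comm]
    rw [heq, hliminf] at hadd
    linarith [hadd.trans hsumφ]
  -- apply pseudomonotonicity of B along the subsequence with v = u₀
  have hwφ : ∀ f : StrongDual ℝ V,
      Tendsto (fun j => f ((u ∘ φ) j)) atTop (nhds (f u₀)) :=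
    fun f => (hw f).comp hφat
  have hbnp : limsup (fun j => B ((u ∘ φ) j) ((u ∘ φ) j - u₀)) atTop ≤ 0 := by
    have : (fun j => B ((u ∘ φ) j) ((u ∘ φ) j - u₀)) = b ∘ φ := by
      funext j; simp [Function.comp, hb]
    rw [this]
    exact h2.trans (by linarith)
  have h0 := hB.2 (u ∘ φ) u₀ hwφ hbnp u₀
  rw [sub_self, map_zero] at h0
  have hfin : liminf (fun j => B ((u ∘ φ) j) ((u ∘ φ) j - u₀)) atTop ≤ -L := by
    have heq : (fun j => B ((u ∘ φ) j) ((u ∘ φ) j - u₀)) = b ∘ φ := by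
      funext j; simp [Function.comp, hb]
    rw [heq]
    exact (liminf_le_limsup hbφle hbφge).trans h2
  linarith [h0.trans hfin]

/-- On a real reflexive Banach space, the sum of two pseudomonotone maps `V → V*`
is pseudomonotone. -/
theorem stmt_3 {V : Type*} [NormedAddCommGroup V] [NormedSpace ℝ V] [CompleteSpace V]
    (hrefl : Function.Surjective (NormedSpace.inclusionInDoubleDual ℝ V))
    (A B : V → StrongDual ℝ V)
    (hA : Pseudomonotone A) (hB : Pseudomonotone B) :
    Pseudomonotone (fun u => A u + B u) := by
  constructor
  · -- boundedness
    intro s hs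
    obtain ⟨CA, hCA⟩ := isBounded_iff_forall_norm_le.1 (hA.1 s hs)
    obtain ⟨CB, hCB⟩ := isBounded_iff_forall_norm_le.1 (hB.1 s hs)
    rw [isBounded_iff_forall_norm_le]
    refine ⟨CA + CB, ?_⟩
    rintro y ⟨x, hx, rfl⟩
    calc ‖A x + B x‖ ≤ ‖A x‖ + ‖B x‖ := norm_add_le _ _
      _ ≤ CA + CB := add_le_add (hCA _ ⟨x, hx, rfl⟩) (hCB _ ⟨x, hx, rfl⟩)
  · intro u u₀ hw hsum v
    -- norm bound on the sequence
    obtain ⟨M, hM0, hM⟩ := weak_conv_bdd u u₀ hw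
    -- norm bounds on A (u k), B (u k)
    have hru : Bornology.IsBounded (Set.range u) :=
      isBounded_iff_forall_norm_le.2 ⟨M, by rintro x ⟨k, rfl⟩; exact hM k⟩
    obtain ⟨CA, hCA⟩ := isBounded_iff_forall_norm_le.1 (hA.1 _ hru)
    obtain ⟨CB, hCB⟩ := isBounded_iff_forall_norm_le.1 (hB.1 _ hru)
    have hCAk : ∀ k, ‖A (u k)‖ ≤ CA := fun k => hCA _ ⟨u k, ⟨k, rfl⟩, rfl⟩
    have hCBk : ∀ k, ‖B (u k)‖ ≤ CB := fun k => hCB _ ⟨u k, ⟨k, rfl⟩, rfl⟩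
    have hCA0 : 0 ≤ CA := (norm_nonneg _).trans (hCAk 0)
    have hCB0 : 0 ≤ CB := (norm_nonneg _).trans (hCBk 0)
    -- generic bound on evaluations
    have hbound : ∀ (T : V → StrongDual ℝ V) (C : ℝ), (∀ k, ‖T (u k)‖ ≤ C) →
        ∀ w : V, ∀ k, |T (u k) (u k - w)| ≤ C * (M + ‖w‖) := by
      intro T C hC w k
      calc |T (u k) (u k - w)| = ‖T (u k) (u k - w)‖ := rfl
        _ ≤ ‖T (u k)‖ * ‖u k - w‖ := ContinuousLinearMap.le_opNorm _ _
        _ ≤ C * (M + ‖w‖) := by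
            refine mul_le_mul (hC k) ?_ (norm_nonneg _) ((norm_nonneg _).trans (hC k))
            calc ‖u k - w‖ ≤ ‖u k‖ + ‖w‖ := norm_sub_le _ _
              _ ≤ M + ‖w‖ := by linarith [hM k]
    set a : ℕ → ℝ := fun k => A (u k) (u k - u₀) with ha
    set b : ℕ → ℝ := fun k => B (u k) (u k - u₀) with hbdef
    have haK : ∀ k, |a k| ≤ CA * (M + ‖u₀‖) := hbound A CA hCAk u₀
    have hbK : ∀ k, |b k| ≤ CB * (M + ‖u₀‖) := hbound B CB hCBk u₀
    have hsum' : limsup (a + b) atTop ≤ 0 := by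
      have : (a + b) = fun k => (A (u k) + B (u k)) (u k - u₀) := by
        funext k; simp [ha, hbdef]
      rw [this]; exact hsum
    have hsum'' : limsup (b + a) atTop ≤ 0 := by
      rwa [add_comm b a]
    -- limsup a ≤ 0 and limsup b ≤ 0
    have hla : limsup a atTop ≤ 0 :=
      limsup_part_nonpos B hB u u₀ hw a b (fun k => rfl) _ _ haK hbK hsum'
    have hlb : limsup b atTop ≤ 0 :=
      limsup_part_nonpos A hA u u₀ hw b a (fun k => rfl) _ _ hbK haK hsum''
    -- apply pseudomonotonicity of A and B
    have h1 := hA.2 u u₀ hw hla v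
    have h2 := hB.2 u u₀ hw hlb v
    -- combine liminfs
    set a' : ℕ → ℝ := fun k => A (u k) (u k - v) with ha'
    set b' : ℕ → ℝ := fun k => B (u k) (u k - v) with hb'
    have ha'K : ∀ k, |a' k| ≤ CA * (M + ‖v‖) := hbound A CA hCAk v
    have hb'K : ∀ k, |b' k| ≤ CB * (M + ‖v‖) := hbound B CB hCBk v
    have hadd : liminf a' atTop + liminf b' atTop ≤ liminf (a' + b') atTop :=
      le_liminf_add
        (isBoundedUnder_of ⟨-(CA * (M + ‖v‖)), fun k => (abs_le.1 (ha'K k)).1⟩)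
        (isBoundedUnder_of ⟨CA * (M + ‖v‖), fun k => (abs_le.1 (ha'K k)).2⟩)
        (isBoundedUnder_of ⟨-(CB * (M + ‖v‖)), fun k => (abs_le.1 (hb'K k)).1⟩)
        ((isBoundedUnder_of (α := ℝ) (r := (· ≤ ·))
          ⟨CB * (M + ‖v‖), fun k => (abs_le.1 (hb'K k)).2⟩).isCoboundedUnder_ge)
    have heq : (a' + b') = fun k => (A (u k) + B (u k)) (u k - v) := by
      funext k; simp [ha', hb']
    calc (A u₀ + B u₀) (u₀ - v) = A u₀ (u₀ - v) + B u₀ (u₀ - v) := rfl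
      _ ≤ liminf a' atTop + liminf b' atTop := add_le_add h1 h2
      _ ≤ liminf (a' + b') atTop := hadd
      _ = liminf (fun k => (A (u k) + B (u k)) (u k - v)) atTop := by rw [heq]
end

section
/- Let L > 0 and c_max > 0. Let α' : ℝ → ℝ be continuous with |α'(s)| ≤ c_max for all s ∈ ℝ. Let (u_k) be a sequence of measurable functions on [0,L] converging pointwise almost everywhere to a measurable function u : [0,L] → ℝ. Let p_k, p : [0,L] → ℝ be square-integrable on (0,L) with p_k ⇀ p weakly in L²(0,L), i.e. ∫₀ᴸ p_k(x) g(x) dx → ∫₀ᴸ p(x) g(x) dx for every g ∈ L²(0,L), and let q ∈ L²(0,L). Then ∫₀ᴸ α'(u_k(x)) q(x) (p_k(x) − p(x)) dx → 0 as k → ∞. -/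
open MeasureTheory Set Filter
open scoped ENNReal

/-- If `u_k → u` pointwise a.e. on `(0,L)`, `|α'| ≤ c_max`, `p_k ⇀ p` weakly in `L²(0,L)` and
`q ∈ L²(0,L)`, then `∫ α'(u_k) q (p_k − p) → 0`. -/
theorem stmt_5 (L c_max : ℝ) (hL : 0 < L) (hc : 0 < c_max)
    (α' : ℝ → ℝ) (hα : Continuous α') (hbound : ∀ s : ℝ, |α' s| ≤ c_max)
    (u : ℕ → ℝ → ℝ) (u₀ : ℝ → ℝ) (hum : ∀ k, Measurable (u k)) (hu₀ : Measurable u₀)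
    (hptw : ∀ᵐ x ∂(volume.restrict (Ioo 0 L)),
      Tendsto (fun k => u k x) atTop (nhds (u₀ x)))
    (p : ℕ → ℝ → ℝ) (p₀ q : ℝ → ℝ)
    (hpk : ∀ k, MemLp (p k) 2 (volume.restrict (Ioo 0 L)))
    (hp₀ : MemLp p₀ 2 (volume.restrict (Ioo 0 L)))
    (hq : MemLp q 2 (volume.restrict (Ioo 0 L)))
    (hweak : ∀ g : ℝ → ℝ, MemLp g 2 (volume.restrict (Ioo 0 L)) →
      Tendsto (fun k => ∫ x in Ioo 0 L, p k x * g x) atTop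
        (nhds (∫ x in Ioo 0 L, p₀ x * g x))) :
    Tendsto (fun k => ∫ x in Ioo 0 L, α' (u k x) * q x * (p k x - p₀ x)) atTop (nhds 0) := by
  set μ := volume.restrict (Ioo (0:ℝ) L) with hμ
  have hqm := hq.aestronglyMeasurable
  set f : ℕ → ℝ → ℝ := fun k x => α' (u k x) * q x with hf_def
  set f₀ : ℝ → ℝ := fun x => α' (u₀ x) * q x with hf₀_def
  have hfm : ∀ k, AEStronglyMeasurable (f k) μ := fun k =>
    ((hα.measurable.comp (hum k)).aestronglyMeasurable).mul hqm
  have hf₀m : AEStronglyMeasurable f₀ μ :=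
    ((hα.measurable.comp hu₀).aestronglyMeasurable).mul hqm
  have hfk : ∀ k, MemLp (f k) 2 μ := fun k =>
    hq.of_le_mul (hfm k) (Eventually.of_forall fun x => by
      simp only [hf_def, norm_mul, Real.norm_eq_abs]
      exact mul_le_mul_of_nonneg_right (hbound _) (abs_nonneg _))
  have hf₀ : MemLp f₀ 2 μ :=
    hq.of_le_mul hf₀m (Eventually.of_forall fun x => by
      simp only [hf₀_def, norm_mul, Real.norm_eq_abs]
      exact mul_le_mul_of_nonneg_right (hbound _) (abs_nonneg _))
  -- pointwise bound for differences
  have hdiff : ∀ k x, |f k x - f₀ x| ≤ 2 * c_max * |q x| := by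
    intro k x
    have h1 : |f k x| ≤ c_max * |q x| := by
      simp only [hf_def, abs_mul]
      exact mul_le_mul_of_nonneg_right (hbound _) (abs_nonneg _)
    have h2 : |f₀ x| ≤ c_max * |q x| := by
      simp only [hf₀_def, abs_mul]
      exact mul_le_mul_of_nonneg_right (hbound _) (abs_nonneg _)
    calc |f k x - f₀ x| ≤ |f k x| + |f₀ x| := abs_sub _ _
      _ ≤ c_max * |q x| + c_max * |q x| := add_le_add h1 h2
      _ = 2 * c_max * |q x| := by ring
  -- strong L² convergence of f k to f₀ (as integral of square)
  have hsq : Tendsto (fun k => ∫ x, (f k x - f₀ x) ^ 2 ∂μ) atTop (nhds 0) := by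
    have h0 : (0 : ℝ) = ∫ x, (0 : ℝ) ∂μ := by simp
    rw [h0]
    apply tendsto_integral_of_dominated_convergence (fun x => (2 * c_max * |q x|) ^ 2)
    · intro k
      exact (((hfm k).sub hf₀m).mul ((hfm k).sub hf₀m)).congr
        (Eventually.of_forall fun x => (pow_two (f k x - f₀ x)).symm)
    · have h1 := (hq.integrable_sq).const_mul ((2 * c_max) ^ 2)
      refine h1.congr (Eventually.of_forall fun x => ?_)
      simp only [mul_pow, sq_abs]
    · intro k
      refine Eventually.of_forall fun x => ?_
      rw [Real.norm_eq_abs, abs_pow]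
      exact pow_le_pow_left₀ (abs_nonneg _) (hdiff k x) 2
    · refine hptw.mono fun x hx => ?_
      have h1 : Tendsto (fun k => α' (u k x)) atTop (nhds (α' (u₀ x))) :=
        (hα.tendsto _).comp hx
      have h2 : Tendsto (fun k => (f k x - f₀ x) ^ 2) atTop
          (nhds ((f₀ x - f₀ x) ^ 2)) :=
        (((h1.mul tendsto_const_nhds).sub tendsto_const_nhds).pow 2)
      simpa using h2
  -- move to Lp space
  haveI : Fact ((1 : ℝ≥0∞) ≤ 2) := ⟨one_le_two⟩
  set Pk : ℕ → Lp ℝ 2 μ := fun k => (hpk k).toLp (p k) with hPk_def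
  set P0 : Lp ℝ 2 μ := hp₀.toLp p₀ with hP0_def
  set Fk : ℕ → Lp ℝ 2 μ := fun k => (hfk k).toLp (f k) with hFk_def
  set F0 : Lp ℝ 2 μ := hf₀.toLp f₀ with hF0_def
  have hinner : ∀ k (g : Lp ℝ 2 μ),
      (inner ℝ (Pk k) g : ℝ) = ∫ x in Ioo 0 L, p k x * g x := by
    intro k g
    rw [L2.inner_def]
    refine integral_congr_ae ?_
    filter_upwards [(hpk k).coeFn_toLp] with x hx
    simp [hPk_def, hx, RCLike.inner_apply]
    ring
  have hinner0 : ∀ g : Lp ℝ 2 μ,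
      (inner ℝ P0 g : ℝ) = ∫ x in Ioo 0 L, p₀ x * g x := by
    intro g
    rw [L2.inner_def]
    refine integral_congr_ae ?_
    filter_upwards [hp₀.coeFn_toLp] with x hx
    simp [hP0_def, hx, RCLike.inner_apply]
    ring
  have hweakLp : ∀ g : Lp ℝ 2 μ,
      Tendsto (fun k => (inner ℝ (Pk k) g : ℝ)) atTop (nhds (inner ℝ P0 g : ℝ)) := by
    intro g
    have h := hweak g (Lp.memLp g)
    rw [← hinner0 g] at h
    refine h.congr fun k => (hinner k g).symm
  -- Banach–Steinhaus: uniform bound on ‖Pk k‖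
  obtain ⟨C, hC⟩ : ∃ C, ∀ k, ‖innerSL ℝ (Pk k)‖ ≤ C := by
    apply banach_steinhaus
    intro g
    obtain ⟨C, hC⟩ := ((hweakLp g).norm).bddAbove_range
    refine ⟨C, fun k => ?_⟩
    simpa using hC ⟨k, rfl⟩
  have hPbound : ∀ k, ‖Pk k - P0‖ ≤ C + ‖P0‖ := by
    intro k
    have h1 : ‖Pk k‖ ≤ C := by rw [← innerSL_apply_norm (𝕜 := ℝ)]; exact hC k
    calc ‖Pk k - P0‖ ≤ ‖Pk k‖ + ‖P0‖ := norm_sub_le _ _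
      _ ≤ C + ‖P0‖ := add_le_add_left h1 _
  -- ‖Fk k - F0‖ → 0
  have hFnorm : ∀ k, ‖Fk k - F0‖ = Real.sqrt (∫ x, (f k x - f₀ x) ^ 2 ∂μ) := by
    intro k
    have hsub : Fk k - F0 = ((hfk k).sub hf₀).toLp (f k - f₀) := by
      rw [MemLp.toLp_sub]
    have h1 : (inner ℝ (Fk k - F0) (Fk k - F0) : ℝ) = ∫ x, (f k x - f₀ x) ^ 2 ∂μ := by
      rw [hsub, L2.inner_def]
      refine integral_congr_ae ?_
      filter_upwards [((hfk k).sub hf₀).coeFn_toLp] with x hx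
      simp [hx, RCLike.inner_apply, Pi.sub_apply, pow_two]
    rw [← h1, real_inner_self_eq_norm_mul_norm, Real.sqrt_mul_self (norm_nonneg _)]
  have hFtend : Tendsto (fun k => ‖Fk k - F0‖) atTop (nhds 0) := by
    have h := (Real.continuous_sqrt.tendsto 0).comp hsq
    rw [Real.sqrt_zero] at h
    exact h.congr fun k => (hFnorm k).symm
  -- rewrite the target as an inner product
  have hrw : ∀ k, ∫ x in Ioo 0 L, α' (u k x) * q x * (p k x - p₀ x)
      = (inner ℝ (Pk k - P0) (Fk k) : ℝ) := by
    intro k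
    have hsub : Pk k - P0 = ((hpk k).sub hp₀).toLp (p k - p₀) := by
      rw [MemLp.toLp_sub]
    rw [hsub, L2.inner_def]
    refine integral_congr_ae ?_
    filter_upwards [((hpk k).sub hp₀).coeFn_toLp, (hfk k).coeFn_toLp] with x ha hb
    simp only [hFk_def, hb]
    simp only [ha, hb, Pi.sub_apply, RCLike.inner_apply, conj_trivial, hf_def]
  -- split and conclude
  have hterm2 : Tendsto (fun k => (inner ℝ (Pk k - P0) F0 : ℝ)) atTop (nhds 0) := by
    have h := (hweakLp F0).sub_const (inner ℝ P0 F0 : ℝ)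
    rw [sub_self] at h
    refine h.congr fun k => ?_
    rw [inner_sub_left]
  have hterm1 : Tendsto (fun k => (inner ℝ (Pk k - P0) (Fk k - F0) : ℝ)) atTop (nhds 0) := by
    have hb : Tendsto (fun k => (C + ‖P0‖) * ‖Fk k - F0‖) atTop (nhds 0) := by
      have := hFtend.const_mul (C + ‖P0‖)
      simpa using this
    refine squeeze_zero_norm (fun k => ?_) hb
    calc ‖(inner ℝ (Pk k - P0) (Fk k - F0) : ℝ)‖ ≤ ‖Pk k - P0‖ * ‖Fk k - F0‖ :=
          norm_inner_le_norm _ _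
      _ ≤ (C + ‖P0‖) * ‖Fk k - F0‖ :=
          mul_le_mul_of_nonneg_right (hPbound k) (norm_nonneg _)
  have h := hterm1.add hterm2
  rw [add_zero] at h
  refine h.congr fun k => ?_
  rw [hrw k, ← inner_add_right, sub_add_cancel]
end

section
/- Let V be a real Banach space with continuous dual V* and duality pairing ⟨·,·⟩. Let B : V × V → V* be a map satisfying: (i) for every w ∈ V the map B(w,·) is monotone, i.e. ⟨B(w,u) − B(w,v), u − v⟩ ≥ 0 for all u, v ∈ V; (ii) for all u, v, z ∈ V the map ε ↦ ⟨B(u, (1−ε)u + εv), z⟩ is continuous at ε = 0; (iii) whenever u_k ⇀ u weakly in V, one has ⟨B(u_k, v), z⟩ → ⟨B(u, v), z⟩ for all v, z ∈ V, and ⟨B(u_k, v), u_k − u⟩ → 0 for all v ∈ V. Define A : V → V* by A(u) := B(u,u) and assume A maps norm-bounded sets to norm-bounded sets. Then A is pseudomonotone: whenever u_k ⇀ u weakly in V and limsup_{k→∞} ⟨A(u_k), u_k − u⟩ ≤ 0, it follows that ⟨A(u), u − v⟩ ≤ liminf_{k→∞} ⟨A(u_k), u_k − v⟩ for every v ∈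 V. -/
open Filter

/-- Minty-trick argument: if `B : V × V → V*` is monotone in its second argument,
hemicontinuous along segments, satisfies the weak-convergence conditions (iii), and
`A(u) := B(u,u)` maps bounded sets to bounded sets, then `A` is pseudomonotone. -/
theorem stmt_6 {V : Type*} [NormedAddCommGroup V] [NormedSpace ℝ V] [CompleteSpace V]
    (B : V → V → StrongDual ℝ V)
    (hmono : ∀ w u v : V, 0 ≤ (B w u - B w v) (u - v))
    (hcont : ∀ u v z : V, ContinuousAt (fun ε : ℝ => B u ((1 - ε) • u + ε • v) z) 0)
    (hweakB : ∀ (u : ℕ → V) (u₀ : V),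
      (∀ f : StrongDual ℝ V, Tendsto (fun k => f (u k)) atTop (nhds (f u₀))) →
      (∀ v z : V, Tendsto (fun k => B (u k) v z) atTop (nhds (B u₀ v z))) ∧
      (∀ v : V, Tendsto (fun k => B (u k) v (u k - u₀)) atTop (nhds 0)))
    (hbdd : ∀ s : Set V, Bornology.IsBounded s →
      Bornology.IsBounded ((fun u => B u u) '' s))
    (u : ℕ → V) (u₀ : V)
    (hweak : ∀ f : StrongDual ℝ V, Tendsto (fun k => f (u k)) atTop (nhds (f u₀)))
    (hlimsup : limsup (fun k => B (u k) (u k) (u k - u₀)) atTop ≤ 0) :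
    ∀ v : V, B u₀ u₀ (u₀ - v) ≤ liminf (fun k => B (u k) (u k) (u k - v)) atTop := by
  classical
  -- Step 0: the sequence `u` is norm-bounded (uniform boundedness principle).
  obtain ⟨M, hM⟩ : ∃ M : ℝ, ∀ k, ‖u k‖ ≤ M := by
    obtain ⟨C', hC'⟩ := banach_steinhaus
      (g := fun k => NormedSpace.inclusionInDoubleDual ℝ V (u k)) (fun f => by
        obtain ⟨C, hC⟩ := ((hweak f).norm).bddAbove_range
        refine ⟨C, fun k => ?_⟩
        simpa [NormedSpace.dual_def] using hC (Set.mem_range_self k))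
    refine ⟨C', fun k => ?_⟩
    have := (NormedSpace.inclusionInDoubleDualLi ℝ (E := V)).norm_map (u k)
    calc ‖u k‖ = ‖NormedSpace.inclusionInDoubleDual ℝ V (u k)‖ := this.symm
      _ ≤ C' := hC' k
  -- hence `A (u k) = B (u k) (u k)` is norm-bounded
  obtain ⟨C, hC⟩ : ∃ C : ℝ, ∀ k, ‖B (u k) (u k)‖ ≤ C := by
    have hsb : Bornology.IsBounded (Set.range u) := by
      rw [isBounded_iff_forall_norm_le]
      exact ⟨M, by rintro x ⟨k, rfl⟩; exact hM k⟩
    obtain ⟨C, hC⟩ := (isBounded_iff_forall_norm_le).1 (hbdd _ hsb)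
    exact ⟨C, fun k => hC _ ⟨u k, Set.mem_range_self k, rfl⟩⟩
  -- global pointwise bound
  have key : ∀ (k : ℕ) (w : V), |B (u k) (u k) (u k - w)| ≤ C * (M + ‖w‖) := by
    intro k w
    calc |B (u k) (u k) (u k - w)| ≤ ‖B (u k) (u k)‖ * ‖u k - w‖ :=
          (B (u k) (u k)).le_opNorm _
      _ ≤ C * (M + ‖w‖) := by
          refine mul_le_mul (hC k) ((norm_sub_le _ _).trans (by gcongr; exact hM k))
            (norm_nonneg _) ((norm_nonneg _).trans (hC k))
  have hble : ∀ w : V, IsBoundedUnder (· ≤ ·) atTop (fun k => B (u k) (u k) (u k - w)) :=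
    fun w => isBoundedUnder_of ⟨C * (M + ‖w‖), fun k => (abs_le.1 (key k w)).2⟩
  have hbge : ∀ w : V, IsBoundedUnder (· ≥ ·) atTop (fun k => B (u k) (u k) (u k - w)) :=
    fun w => isBoundedUnder_of ⟨-(C * (M + ‖w‖)), fun k => (abs_le.1 (key k w)).1⟩
  have hW := hweakB u u₀ hweak
  -- Step 1: ⟨A u_k, u_k - u₀⟩ → 0
  have hb0 : Tendsto (fun k => B (u k) u₀ (u k - u₀)) atTop (nhds 0) := hW.2 u₀
  have hba : ∀ k, B (u k) u₀ (u k - u₀) ≤ B (u k) (u k) (u k - u₀) := fun k => by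
    have h := hmono (u k) (u k) u₀
    rw [ContinuousLinearMap.sub_apply] at h
    linarith
  have ha0 : Tendsto (fun k => B (u k) (u k) (u k - u₀)) atTop (nhds 0) := by
    refine tendsto_of_le_liminf_of_limsup_le ?_ hlimsup (hble u₀) (hbge u₀)
    calc (0 : ℝ) = liminf (fun k => B (u k) u₀ (u k - u₀)) atTop := hb0.liminf_eq.symm
      _ ≤ liminf (fun k => B (u k) (u k) (u k - u₀)) atTop :=
        liminf_le_liminf (Eventually.of_forall hba) hb0.isBoundedUnder_ge
          ((hble u₀).isCoboundedUnder_ge)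
  intro v
  -- Step 2: for every ε ∈ (0,1], B u₀ z_ε (u₀ - v) ≤ liminf d
  have hg : ∀ ε : ℝ, 0 < ε →
      B u₀ ((1 - ε) • u₀ + ε • v) (u₀ - v) ≤
        liminf (fun k => B (u k) (u k) (u k - v)) atTop := by
    intro ε hε
    set z : V := (1 - ε) • u₀ + ε • v with hz
    have hz' : u₀ - z = ε • (u₀ - v) := by rw [hz]; module
    -- liminf lower bound for the sequence at z
    have hc : Tendsto (fun k => B (u k) z (u k - u₀) + B (u k) z (u₀ - z)) atTop
        (nhds (0 + B u₀ z (u₀ - z))) := (hW.2 z).add (hW.1 z (u₀ - z))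
    have hc' : Tendsto (fun k => B (u k) z (u k - z)) atTop (nhds (B u₀ z (u₀ - z))) := by
      rw [show B u₀ z (u₀ - z) = 0 + B u₀ z (u₀ - z) by ring]
      refine hc.congr fun k => ?_
      rw [← map_add]
      congr 1
      abel
    have hmz : ∀ k, B (u k) z (u k - z) ≤ B (u k) (u k) (u k - z) := fun k => by
      have h := hmono (u k) (u k) z
      rw [ContinuousLinearMap.sub_apply] at h
      linarith
    have h2 : B u₀ z (u₀ - z) ≤ liminf (fun k => B (u k) (u k) (u k - z)) atTop := by
      calc B u₀ z (u₀ - z) = liminf (fun k => B (u k) z (u k - z)) atTop := hc'.liminf_eq.symm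
        _ ≤ _ := liminf_le_liminf (Eventually.of_forall hmz) hc'.isBoundedUnder_ge
            ((hble z).isCoboundedUnder_ge)
    -- decompose: A u_k (u_k - z) = (1-ε) A u_k (u_k - u₀) + ε A u_k (u_k - v)
    have hdecomp : (fun k => B (u k) (u k) (u k - z)) =
        (fun k => (1 - ε) * B (u k) (u k) (u k - u₀)) +
        (fun k => ε * B (u k) (u k) (u k - v)) := by
      funext k
      show B (u k) (u k) (u k - z) =
        (1 - ε) * B (u k) (u k) (u k - u₀) + ε * B (u k) (u k) (u k - v)
      have : u k - z = (1 - ε) • (u k - u₀) + ε • (u k - v) := by rw [hz]; module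
      rw [this, map_add, map_smul, map_smul, smul_eq_mul, smul_eq_mul]
    have he0 : Tendsto (fun k => (1 - ε) * B (u k) (u k) (u k - u₀)) atTop (nhds 0) := by
      simpa using ha0.const_mul (1 - ε)
    have hεd : ε * liminf (fun k => B (u k) (u k) (u k - v)) atTop
        = liminf (fun k => ε * B (u k) (u k) (u k - v)) atTop := by
      exact Monotone.map_liminf_of_continuousAt (f := fun x : ℝ => ε * x)
        (fun a b hab => mul_le_mul_of_nonneg_left hab hε.le) _ (by fun_prop)
        ((hble v).isCoboundedUnder_ge) (hbge v)
    have h3 : liminf (fun k => B (u k) (u k) (u k - z)) atTop ≤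
        ε * liminf (fun k => B (u k) (u k) (u k - v)) atTop := by
      rw [hdecomp, hεd]
      have := liminf_add_le (f := atTop)
        (u := fun k => (1 - ε) * B (u k) (u k) (u k - u₀))
        (v := fun k => ε * B (u k) (u k) (u k - v))
        he0.isBoundedUnder_ge he0.isBoundedUnder_le
        (isBoundedUnder_of ⟨-(ε * (C * (M + ‖v‖))), fun k => by
          have := (abs_le.1 (key k v)).1; nlinarith⟩)
        ((isBoundedUnder_of ⟨ε * (C * (M + ‖v‖)), fun k => by
          have := (abs_le.1 (key k v)).2; nlinarith⟩).isCoboundedUnder_ge)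
      calc liminf _ atTop ≤ limsup (fun k => (1 - ε) * B (u k) (u k) (u k - u₀)) atTop +
            liminf (fun k => ε * B (u k) (u k) (u k - v)) atTop := this
        _ = _ := by rw [he0.limsup_eq, zero_add]
    -- combine
    have h4 : ε * B u₀ z (u₀ - v) ≤ ε * liminf (fun k => B (u k) (u k) (u k - v)) atTop := by
      have : B u₀ z (u₀ - z) = ε * B u₀ z (u₀ - v) := by
        rw [hz', map_smul, smul_eq_mul]
      linarith [h2.trans h3]
    exact le_of_mul_le_mul_left h4 hε
  -- Step 3: hemicontinuity at ε = 0
  have hcv := (hcont u₀ v (u₀ - v)).tendsto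
  have hseq : Tendsto (fun n : ℕ => (1 : ℝ) / (n + 1)) atTop (nhds 0) :=
    tendsto_one_div_add_atTop_nhds_zero_nat
  have h5 : Tendsto (fun n : ℕ =>
      B u₀ ((1 - (1 : ℝ) / (n + 1)) • u₀ + ((1 : ℝ) / (n + 1)) • v) (u₀ - v)) atTop
      (nhds (B u₀ u₀ (u₀ - v))) := by
    have := hcv.comp hseq
    simpa [Function.comp_def] using this
  refine le_of_tendsto h5 (Eventually.of_forall fun n => ?_)
  exact hg _ (by positivity)
end

section
/- Let L > 0, c_max > 0, β_max > 0 and c_c > 0. Let α' : ℝ → ℝ be continuous with 0 < α'(s) ≤ c_max for all s ∈ ℝ, and let β₀, β_L : ℝ → ℝ satisfy |β₀(s)| ≤ β_max and |β_L(s)| ≤ β_max for all s ∈ ℝ. Assume the embedding property: every continuously differentiable w : [0,L] → ℝ satisfies max_{x ∈ [0,L]} |w(x)| ≤ c_c ‖w‖_V. Then for all continuously differentiable u, v : [0,L] → ℝ, | ∫₀ᴸ α'(u(x)) u'(x) v'(x) dx + β_L(u(L)) v(L) + β₀(u(0)) v(0) | ≤ max(c_max, 2 β_max c_c) · (1 +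 ‖u‖_V) · ‖v‖_V. -/
open Set MeasureTheory

/-- Cauchy–Schwarz for interval integrals of continuous functions. -/
lemma cs_interval (L : ℝ) (hL : 0 ≤ L) (f g : ℝ → ℝ) (hf : Continuous f) (hg : Continuous g) :
    (∫ x in (0:ℝ)..L, |f x| * |g x|) ≤
      Real.sqrt (∫ x in (0:ℝ)..L, f x ^ 2) * Real.sqrt (∫ x in (0:ℝ)..L, g x ^ 2) := by
  rw [intervalIntegral.integral_of_le hL, intervalIntegral.integral_of_le hL,
    intervalIntegral.integral_of_le hL]
  set μ := volume.restrict (Ioc (0:ℝ) L) with hμ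
  haveI : IsFiniteMeasure μ := ⟨by simp [hμ, Measure.restrict_apply_univ]⟩
  have hpq : Real.HolderConjugate 2 2 := Real.holderConjugate_iff.2 ⟨one_lt_two, by norm_num⟩
  obtain ⟨Cf, hCf⟩ := (isCompact_Icc (a := (0:ℝ)) (b := L)).exists_bound_of_continuousOn
    hf.continuousOn
  obtain ⟨Cg, hCg⟩ := (isCompact_Icc (a := (0:ℝ)) (b := L)).exists_bound_of_continuousOn
    hg.continuousOn
  have hmf : MemLp f (ENNReal.ofReal 2) μ := by
    refine MemLp.of_bound (hf.aestronglyMeasurable) Cf ?_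
    filter_upwards [ae_restrict_mem measurableSet_Ioc] with x hx
    exact hCf x (Ioc_subset_Icc_self hx)
  have hmg : MemLp g (ENNReal.ofReal 2) μ := by
    refine MemLp.of_bound (hg.aestronglyMeasurable) Cg ?_
    filter_upwards [ae_restrict_mem measurableSet_Ioc] with x hx
    exact hCg x (Ioc_subset_Icc_self hx)
  have h := MeasureTheory.integral_mul_le_Lp_mul_Lq_of_nonneg hpq
    (f := fun x => |f x|) (g := fun x => |g x|) (μ := μ)
    (Filter.Eventually.of_forall fun x => abs_nonneg _)
    (Filter.Eventually.of_forall fun x => abs_nonneg _)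
    (hmf.abs) (hmg.abs)
  calc (∫ x, |f x| * |g x| ∂μ)
      ≤ (∫ x, |f x| ^ (2:ℝ) ∂μ) ^ (1/(2:ℝ)) * (∫ x, |g x| ^ (2:ℝ) ∂μ) ^ (1/(2:ℝ)) := h
    _ = _ := by
        congr 1
        · rw [Real.sqrt_eq_rpow]
          congr 1
          refine integral_congr_ae (Filter.Eventually.of_forall fun x => ?_)
          show |f x| ^ (2:ℝ) = f x ^ 2
          rw [show ((2:ℝ)) = ((2:ℕ):ℝ) by norm_num, Real.rpow_natCast, sq_abs]
        · rw [Real.sqrt_eq_rpow]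
          congr 1
          refine integral_congr_ae (Filter.Eventually.of_forall fun x => ?_)
          show |g x| ^ (2:ℝ) = g x ^ 2
          rw [show ((2:ℝ)) = ((2:ℕ):ℝ) by norm_num, Real.rpow_natCast, sq_abs]

/-- The `W^{1,2}(0,L)`-norm of a function: `‖w‖_V = sqrt(∫ w² + ∫ (w')²)`. -/
noncomputable def vNorm (L : ℝ) (w : ℝ → ℝ) : ℝ :=
  Real.sqrt ((∫ x in (0:ℝ)..L, w x ^ 2) + ∫ x in (0:ℝ)..L, deriv w x ^ 2)

/-- `sqrt(∫ (w')²) ≤ vNorm L w`. -/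
lemma sqrt_deriv_le_vNorm (L : ℝ) (hL : 0 ≤ L) (w : ℝ → ℝ) :
    Real.sqrt (∫ x in (0:ℝ)..L, deriv w x ^ 2) ≤ vNorm L w := by
  apply Real.sqrt_le_sqrt
  have : (0:ℝ) ≤ ∫ x in (0:ℝ)..L, w x ^ 2 :=
    intervalIntegral.integral_nonneg hL fun x _ => sq_nonneg _
  linarith

/-- Growth condition `|⟨A(u),v⟩| ≤ max(c_max, 2 β_max c_c)(1 + ‖u‖_V)‖v‖_V` for the
quasilinear heat operator with bounded heat fluxes on the boundary. -/
theorem stmt_8 (L c_max β_max c_c : ℝ) (hL : 0 < L) (hcmax : 0 < c_max)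
    (hβmax : 0 < β_max) (hcc : 0 < c_c)
    (α' : ℝ → ℝ) (hα : Continuous α') (hαpos : ∀ s : ℝ, 0 < α' s)
    (hαb : ∀ s : ℝ, α' s ≤ c_max)
    (β₀ βL : ℝ → ℝ) (hβ₀ : ∀ s : ℝ, |β₀ s| ≤ β_max) (hβL : ∀ s : ℝ, |βL s| ≤ β_max)
    (hemb : ∀ w : ℝ → ℝ, ContDiff ℝ 1 w → ∀ x ∈ Icc (0:ℝ) L, |w x| ≤ c_c * vNorm L w)
    (u v : ℝ → ℝ) (hu : ContDiff ℝ 1 u) (hv : ContDiff ℝ 1 v) :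
    |(∫ x in (0:ℝ)..L, α' (u x) * deriv u x * deriv v x) + βL (u L) * v L + β₀ (u 0) * v 0| ≤
      max c_max (2 * β_max * c_c) * (1 + vNorm L u) * vNorm L v := by
  have hL' : (0:ℝ) ≤ L := hL.le
  set Nu := vNorm L u with hNu
  set Nv := vNorm L v with hNv
  have hNu0 : 0 ≤ Nu := Real.sqrt_nonneg _
  have hNv0 : 0 ≤ Nv := Real.sqrt_nonneg _
  have hu' : Continuous (deriv u) := hu.continuous_deriv le_rfl
  have hv' : Continuous (deriv v) := hv.continuous_deriv le_rfl
  -- bound for the integral term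
  have hI : |∫ x in (0:ℝ)..L, α' (u x) * deriv u x * deriv v x| ≤ c_max * Nu * Nv := by
    have hcont : Continuous fun x => α' (u x) * deriv u x * deriv v x :=
      ((hα.comp hu.continuous).mul hu').mul hv'
    have h1 : |∫ x in (0:ℝ)..L, α' (u x) * deriv u x * deriv v x| ≤
        ∫ x in (0:ℝ)..L, |α' (u x) * deriv u x * deriv v x| :=
      intervalIntegral.abs_integral_le_integral_abs hL'
    have h2 : (∫ x in (0:ℝ)..L, |α' (u x) * deriv u x * deriv v x|) ≤
        ∫ x in (0:ℝ)..L, c_max * (|deriv u x| * |deriv v x|) := by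
      apply intervalIntegral.integral_mono_on hL'
      · exact hcont.abs.intervalIntegrable _ _
      · exact (continuous_const.mul (hu'.abs.mul hv'.abs)).intervalIntegrable _ _
      · intro x _
        rw [abs_mul, abs_mul]
        have h3 : |α' (u x)| ≤ c_max := by
          rw [abs_of_pos (hαpos _)]; exact hαb _
        have := mul_nonneg (abs_nonneg (deriv u x)) (abs_nonneg (deriv v x))
        calc |α' (u x)| * |deriv u x| * |deriv v x|
            = |α' (u x)| * (|deriv u x| * |deriv v x|) := by ring
          _ ≤ c_max * (|deriv u x| * |deriv v x|) := by
              exact mul_le_mul_of_nonneg_right h3 this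
    have h4 : (∫ x in (0:ℝ)..L, c_max * (|deriv u x| * |deriv v x|)) =
        c_max * ∫ x in (0:ℝ)..L, |deriv u x| * |deriv v x| := by
      rw [← intervalIntegral.integral_const_mul]
    have h5 := cs_interval L hL' (deriv u) (deriv v) hu' hv'
    have h6 : Real.sqrt (∫ x in (0:ℝ)..L, deriv u x ^ 2) ≤ Nu := sqrt_deriv_le_vNorm L hL' u
    have h7 : Real.sqrt (∫ x in (0:ℝ)..L, deriv v x ^ 2) ≤ Nv := sqrt_deriv_le_vNorm L hL' v
    have h8 : Real.sqrt (∫ x in (0:ℝ)..L, deriv u x ^ 2) *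
        Real.sqrt (∫ x in (0:ℝ)..L, deriv v x ^ 2) ≤ Nu * Nv :=
      mul_le_mul h6 h7 (Real.sqrt_nonneg _) hNu0
    calc |∫ x in (0:ℝ)..L, α' (u x) * deriv u x * deriv v x|
        ≤ ∫ x in (0:ℝ)..L, |α' (u x) * deriv u x * deriv v x| := h1
      _ ≤ ∫ x in (0:ℝ)..L, c_max * (|deriv u x| * |deriv v x|) := h2
      _ = c_max * ∫ x in (0:ℝ)..L, |deriv u x| * |deriv v x| := h4
      _ ≤ c_max * (Real.sqrt (∫ x in (0:ℝ)..L, deriv u x ^ 2) *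
            Real.sqrt (∫ x in (0:ℝ)..L, deriv v x ^ 2)) :=
          mul_le_mul_of_nonneg_left h5 hcmax.le
      _ ≤ c_max * (Nu * Nv) := mul_le_mul_of_nonneg_left h8 hcmax.le
      _ = c_max * Nu * Nv := by ring
  -- bounds for the boundary terms
  have hvL : |v L| ≤ c_c * Nv := hemb v hv L ⟨hL', le_rfl⟩
  have hv0 : |v 0| ≤ c_c * Nv := hemb v hv 0 ⟨le_rfl, hL'⟩
  have hBL : |βL (u L) * v L| ≤ β_max * (c_c * Nv) := by
    rw [abs_mul]
    exact mul_le_mul (hβL _) hvL (abs_nonneg _) hβmax.le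
  have hB0 : |β₀ (u 0) * v 0| ≤ β_max * (c_c * Nv) := by
    rw [abs_mul]
    exact mul_le_mul (hβ₀ _) hv0 (abs_nonneg _) hβmax.le
  -- combine
  have htri : |(∫ x in (0:ℝ)..L, α' (u x) * deriv u x * deriv v x) + βL (u L) * v L
      + β₀ (u 0) * v 0| ≤ c_max * Nu * Nv + β_max * (c_c * Nv) + β_max * (c_c * Nv) := by
    calc |(∫ x in (0:ℝ)..L, α' (u x) * deriv u x * deriv v x) + βL (u L) * v L + β₀ (u 0) * v 0|
        ≤ |(∫ x in (0:ℝ)..L, α' (u x) * deriv u x * deriv v x) + βL (u L) * v L|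
            + |β₀ (u 0) * v 0| := abs_add_le _ _
      _ ≤ |∫ x in (0:ℝ)..L, α' (u x) * deriv u x * deriv v x| + |βL (u L) * v L|
            + |β₀ (u 0) * v 0| := by gcongr; exact abs_add_le _ _
      _ ≤ c_max * Nu * Nv + β_max * (c_c * Nv) + β_max * (c_c * Nv) := by gcongr
  refine htri.trans ?_
  have hm1 : c_max ≤ max c_max (2 * β_max * c_c) := le_max_left _ _
  have hm2 : 2 * β_max * c_c ≤ max c_max (2 * β_max * c_c) := le_max_right _ _
  nlinarith [mul_nonneg hNu0 hNv0, mul_le_mul_of_nonneg_right hm2 hNv0,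
    mul_le_mul_of_nonneg_right hm1 (mul_nonneg hNu0 hNv0)]
end

section
/- Let L > 0, β'_max > 0 and c_c > 0, and set c_u := 2 β'_max c_c². Assume the embedding property: every continuously differentiable w : [0,L] → ℝ satisfies max_{x ∈ [0,L]} |w(x)| ≤ c_c ‖w‖_V. Let β₀, β_L : ℝ → ℝ be differentiable with |β₀'(s)| ≤ β'_max and |β_L'(s)| ≤ β'_max for all s ∈ ℝ. Let α' : ℝ → ℝ, let α'_c ≥ c_u, and let u, v : [0,L] → ℝ be continuously differentiable functions such that ∫₀ᴸ (α'(u(x)) u'(x) − α'(v(x)) v'(x)) (u'(x) − v'(x)) dx ≥ α'_c ∫₀ᴸ (u'(x) − v'(x))² dx. Then ∫₀ᴸ (α'(u(x)) u'(x) − α'(v(x)) v'(x)) (u'(x) − v'(x)) dx + (β_L(u(L)) − β_L(v(L))) (u(L) − v(L)) + (β₀(u(0)) − β₀(v(0))) (u(0) − v(0)) ≥ −c_u ∫₀ᴸ (u(x) − v(x))² dx. -/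
open Set

lemma lip_aux (f : ℝ → ℝ) (hf : Differentiable ℝ f) (C : ℝ) (hC : ∀ s, |deriv f s| ≤ C)
    (a b : ℝ) : |f a - f b| ≤ C * |a - b| := by
  have := (convex_univ : Convex ℝ (univ : Set ℝ)).norm_image_sub_le_of_norm_deriv_le
    (fun x _ => hf x) (fun x _ => by simpa using hC x) (mem_univ b) (mem_univ a)
  simpa [Real.norm_eq_abs] using this

/-- Semimonotonicity `⟨A(u) − A(v), u − v⟩ ≥ −c_u ‖u − v‖_H²` with `c_u = 2 β'_max c_c²`,
under the strengthened monotonicity assumption on the principal part. -/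
theorem stmt_9 (L β'max c_c : ℝ) (hL : 0 < L) (hβ'max : 0 < β'max) (hcc : 0 < c_c)
    (hemb : ∀ w : ℝ → ℝ, ContDiff ℝ 1 w → ∀ x ∈ Icc (0:ℝ) L, |w x| ≤ c_c * vNorm L w)
    (β₀ βL : ℝ → ℝ) (hβ₀d : Differentiable ℝ β₀) (hβLd : Differentiable ℝ βL)
    (hβ₀' : ∀ s : ℝ, |deriv β₀ s| ≤ β'max) (hβL' : ∀ s : ℝ, |deriv βL s| ≤ β'max)
    (α' : ℝ → ℝ) (α'c : ℝ) (hαc : 2 * β'max * c_c ^ 2 ≤ α'c)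
    (u v : ℝ → ℝ) (hu : ContDiff ℝ 1 u) (hv : ContDiff ℝ 1 v)
    (hmon : α'c * (∫ x in (0:ℝ)..L, (deriv u x - deriv v x) ^ 2) ≤
      ∫ x in (0:ℝ)..L,
        (α' (u x) * deriv u x - α' (v x) * deriv v x) * (deriv u x - deriv v x)) :
    -(2 * β'max * c_c ^ 2) * (∫ x in (0:ℝ)..L, (u x - v x) ^ 2) ≤
      (∫ x in (0:ℝ)..L,
          (α' (u x) * deriv u x - α' (v x) * deriv v x) * (deriv u x - deriv v x)) +
        (βL (u L) - βL (v L)) * (u L - v L) + (β₀ (u 0) - β₀ (v 0)) * (u 0 - v 0) := by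
  set w : ℝ → ℝ := fun x => u x - v x with hw_def
  have hw : ContDiff ℝ 1 w := hu.sub hv
  have hdw : ∀ x, deriv w x = deriv u x - deriv v x := fun x =>
    deriv_fun_sub (hu.differentiable one_ne_zero x) (hv.differentiable one_ne_zero x)
  set Iw2 : ℝ := ∫ x in (0:ℝ)..L, (u x - v x) ^ 2 with hIw2_def
  have hIw'eq : (∫ x in (0:ℝ)..L, deriv w x ^ 2)
      = ∫ x in (0:ℝ)..L, (deriv u x - deriv v x) ^ 2 := by
    apply intervalIntegral.integral_congr
    intro x _; simp [hdw x]
  set Iw'2 : ℝ := ∫ x in (0:ℝ)..L, (deriv u x - deriv v x) ^ 2 with hIw'2_def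
  have h1 : 0 ≤ Iw2 := intervalIntegral.integral_nonneg hL.le (fun x _ => sq_nonneg _)
  have h2 : 0 ≤ Iw'2 := intervalIntegral.integral_nonneg hL.le (fun x _ => sq_nonneg _)
  have hvn : vNorm L w ^ 2 = Iw2 + Iw'2 := by
    rw [vNorm, Real.sq_sqrt]
    · rw [hIw'eq]
    · rw [hIw'eq]
      exact add_nonneg h1 h2
  have hbd : ∀ x ∈ Icc (0:ℝ) L, (u x - v x) ^ 2 ≤ c_c ^ 2 * (Iw2 + Iw'2) := by
    intro x hx
    have h := hemb w hw x hx
    have hvn0 : 0 ≤ vNorm L w := Real.sqrt_nonneg _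
    have : |w x| ^ 2 ≤ (c_c * vNorm L w) ^ 2 := by
      apply pow_le_pow_left₀ (abs_nonneg _) h
    calc (u x - v x) ^ 2 = |w x| ^ 2 := by rw [sq_abs]
      _ ≤ (c_c * vNorm L w) ^ 2 := this
      _ = c_c ^ 2 * (Iw2 + Iw'2) := by rw [mul_pow, hvn]
  have hbL : -(β'max * (u L - v L) ^ 2) ≤ (βL (u L) - βL (v L)) * (u L - v L) := by
    have h := lip_aux βL hβLd β'max hβL' (u L) (v L)
    have h2 := neg_abs_le ((βL (u L) - βL (v L)) * (u L - v L))
    have h3 : |(βL (u L) - βL (v L)) * (u L - v L)| = |βL (u L) - βL (v L)| * |u L - v L| :=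
      abs_mul _ _
    nlinarith [abs_nonneg (u L - v L), sq_abs (u L - v L)]
  have hb0 : -(β'max * (u 0 - v 0) ^ 2) ≤ (β₀ (u 0) - β₀ (v 0)) * (u 0 - v 0) := by
    have h := lip_aux β₀ hβ₀d β'max hβ₀' (u 0) (v 0)
    have h2 := neg_abs_le ((β₀ (u 0) - β₀ (v 0)) * (u 0 - v 0))
    have h3 : |(β₀ (u 0) - β₀ (v 0)) * (u 0 - v 0)| = |β₀ (u 0) - β₀ (v 0)| * |u 0 - v 0| :=
      abs_mul _ _
    nlinarith [abs_nonneg (u 0 - v 0), sq_abs (u 0 - v 0)]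
  have hL0 := hbd L ⟨hL.le, le_rfl⟩
  have h00 := hbd 0 ⟨le_rfl, hL.le⟩
  have hmon' : (2 * β'max * c_c ^ 2) * Iw'2 ≤
      ∫ x in (0:ℝ)..L,
        (α' (u x) * deriv u x - α' (v x) * deriv v x) * (deriv u x - deriv v x) := by
    calc (2 * β'max * c_c ^ 2) * Iw'2 ≤ α'c * Iw'2 := by nlinarith
      _ ≤ _ := hmon
  nlinarith [mul_pos hβ'max (mul_pos hcc hcc)]
end

section
/- Let a < b be real numbers, let f : [a,b] → ℝ be continuously differentiable, and let ε > 0. Then there exist an integer n ≥ 2 and a function p : [a,b] → ℝ such that, with the equidistant partition points x_j := a + (j−1)(b−a)/(n−1) for j = 1, …, n: (1) p is continuously differentiable on [a,b]; (2) on each subinterval [x_j, x_{j+1}] (j = 1, …, n−1) p coincides with a polynomial of degree at most 3; (3) p(x_j) = f(x_j) for all j = 1, …, n; (4) for each j = 1, …, n−1 and all x ∈ [x_j, x_{j+1}], min(f(x_j), f(x_{j+1})) ≤ p(x) ≤ max(f(x_j), f(x_{j+1})); and (5) max_{x ∈ [a,b]} |p(x) − f(x)| < ε. -/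
open Set intervalIntegral

noncomputable def pchipG : ℝ → ℝ := fun s => 6 * max (s * (1 - s)) 0

lemma pchipG_cont : Continuous pchipG :=
  continuous_const.mul ((continuous_id.mul (continuous_const.sub continuous_id)).max continuous_const)

lemma pchipG_nonneg (s : ℝ) : 0 ≤ pchipG s :=
  mul_nonneg (by norm_num) (le_max_right _ _)

noncomputable def pchipPhi : ℝ → ℝ := fun t => ∫ s in (0:ℝ)..t, pchipG s

lemma pchipPhi_hasDerivAt (t : ℝ) : HasDerivAt pchipPhi (pchipG t) t :=
  (pchipG_cont.integral_hasStrictDerivAt 0 t).hasDerivAt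

lemma pchipPhi_contDiff : ContDiff ℝ 1 pchipPhi := by
  rw [contDiff_one_iff_deriv]
  constructor
  · exact fun t => (pchipPhi_hasDerivAt t).differentiableAt
  · have : deriv pchipPhi = pchipG := funext fun t => (pchipPhi_hasDerivAt t).deriv
    rw [this]; exact pchipG_cont

lemma pchipPhi_mono : Monotone pchipPhi := by
  intro t u htu
  have h1 : IntervalIntegrable pchipG MeasureTheory.volume 0 t := pchipG_cont.intervalIntegrable _ _
  have h2 : IntervalIntegrable pchipG MeasureTheory.volume t u := pchipG_cont.intervalIntegrable _ _
  have : pchipPhi u = pchipPhi t + ∫ s in t..u, pchipG s := by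
    rw [pchipPhi, pchipPhi, integral_add_adjacent_intervals h1 h2]
  rw [this]
  have : 0 ≤ ∫ s in t..u, pchipG s := integral_nonneg htu fun s _ => pchipG_nonneg s
  linarith

lemma pchipPhi_of_nonpos {t : ℝ} (ht : t ≤ 0) : pchipPhi t = 0 := by
  have : EqOn pchipG 0 (uIcc 0 t) := by
    intro s hs
    rw [uIcc_of_ge ht] at hs
    have hs0 : s ≤ 0 := hs.2
    have : s * (1 - s) ≤ 0 := mul_nonpos_of_nonpos_of_nonneg hs0 (by linarith)
    simp [pchipG, max_eq_right this]
  rw [pchipPhi, integral_congr this]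
  simp

lemma pchipPhi_of_mem {t : ℝ} (h0 : 0 ≤ t) (h1 : t ≤ 1) : pchipPhi t = 3 * t ^ 2 - 2 * t ^ 3 := by
  have : EqOn pchipG (fun s => 6 * s ^ 1 - 6 * s ^ 2) (uIcc 0 t) := by
    intro s hs
    rw [uIcc_of_le h0] at hs
    have : 0 ≤ s * (1 - s) := mul_nonneg hs.1 (by linarith [hs.2])
    simp only [pchipG, max_eq_left this]
    ring
  rw [pchipPhi, integral_congr this]
  rw [integral_sub ((by fun_prop : Continuous fun x : ℝ => 6 * x ^ 1).intervalIntegrable _ _)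
    ((by fun_prop : Continuous fun x : ℝ => 6 * x ^ 2).intervalIntegrable _ _),
    intervalIntegral.integral_const_mul, intervalIntegral.integral_const_mul, integral_pow, integral_pow]
  norm_num; ring

lemma pchipPhi_of_one_le {t : ℝ} (h : 1 ≤ t) : pchipPhi t = 1 := by
  have h1 : IntervalIntegrable pchipG MeasureTheory.volume 0 1 := pchipG_cont.intervalIntegrable _ _
  have h2 : IntervalIntegrable pchipG MeasureTheory.volume 1 t := pchipG_cont.intervalIntegrable _ _
  have key : pchipPhi t = pchipPhi 1 + ∫ s in (1:ℝ)..t, pchipG s := by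
    rw [pchipPhi, pchipPhi, integral_add_adjacent_intervals h1 h2]
  have hz : EqOn pchipG 0 (uIcc 1 t) := by
    intro s hs
    rw [uIcc_of_le h] at hs
    have : s * (1 - s) ≤ 0 := mul_nonpos_of_nonneg_of_nonpos (by linarith [hs.1]) (by linarith [hs.1])
    simp [pchipG, max_eq_right this]
  rw [key, integral_congr hz, pchipPhi_of_mem zero_le_one le_rfl]
  simp
  norm_num

lemma pchipPhi_nonneg (t : ℝ) : 0 ≤ pchipPhi t := by
  rcases le_total t 0 with h | h
  · rw [pchipPhi_of_nonpos h]
  · have := pchipPhi_mono h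
    rwa [pchipPhi_of_nonpos le_rfl] at this

lemma pchipPhi_le_one (t : ℝ) : pchipPhi t ≤ 1 := by
  rcases le_total 1 t with h | h
  · rw [pchipPhi_of_one_le h]
  · have := pchipPhi_mono h
    rwa [pchipPhi_of_one_le le_rfl] at this

set_option maxHeartbeats 2000000 in
/-- Approximation property of shape-preserving piecewise cubic Hermite (PCHIP) interpolation:
every `C¹` function on `[a,b]` can be uniformly approximated within `ε` by a `C¹` piecewise
cubic interpolant on a sufficiently fine equidistant partition, which interpolates the function
values at the partition points and, on each subinterval, stays between the two interpolated
endpoint values. -/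
theorem stmt_10 (a b : ℝ) (hab : a < b) (f : ℝ → ℝ)
    (hf : ContDiffOn ℝ 1 f (Icc a b)) (ε : ℝ) (hε : 0 < ε) :
    ∃ (n : ℕ) (p : ℝ → ℝ) (node : ℕ → ℝ),
      2 ≤ n ∧
      (∀ j : ℕ, node j = a + ((j : ℝ) - 1) * (b - a) / ((n : ℝ) - 1)) ∧
      ContDiffOn ℝ 1 p (Icc a b) ∧
      (∀ j : ℕ, 1 ≤ j → j + 1 ≤ n → ∃ q : Polynomial ℝ, q.degree ≤ 3 ∧
        ∀ x ∈ Icc (node j) (node (j + 1)), p x = q.eval x) ∧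
      (∀ j : ℕ, 1 ≤ j → j ≤ n → p (node j) = f (node j)) ∧
      (∀ j : ℕ, 1 ≤ j → j + 1 ≤ n → ∀ x ∈ Icc (node j) (node (j + 1)),
        min (f (node j)) (f (node (j + 1))) ≤ p x ∧
          p x ≤ max (f (node j)) (f (node (j + 1)))) ∧
      (∀ x ∈ Icc a b, |p x - f x| < ε) := by
  have hfc : ContinuousOn f (Icc a b) := hf.continuousOn
  have huc : UniformContinuousOn f (Icc a b) :=
    isCompact_Icc.uniformContinuousOn_of_continuous hfc
  obtain ⟨δ, hδ0, hδ⟩ := Metric.uniformContinuousOn_iff.mp huc (ε/2) (by linarith)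
  obtain ⟨m, hm⟩ := exists_nat_gt ((b - a)/δ)
  set n : ℕ := m + 2 with hn
  have hn1 : ((n:ℝ) - 1) = (m:ℝ) + 1 := by rw [hn]; push_cast; ring
  have hn1pos : 0 < ((n:ℝ) - 1) := by rw [hn1]; positivity
  set Δ : ℝ := (b - a)/((n:ℝ) - 1) with hΔdef
  have hΔ : 0 < Δ := div_pos (by linarith) hn1pos
  have hnΔ : ((n:ℝ) - 1) * Δ = b - a := by
    rw [hΔdef]; field_simp
  have hΔδ : Δ < δ := by
    rw [hΔdef, div_lt_iff₀ hn1pos]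
    have h1 : (b - a)/δ < (n:ℝ) - 1 := by rw [hn1]; linarith
    have := (div_lt_iff₀ hδ0).mp h1
    linarith
  set node : ℕ → ℝ := fun j => a + ((j : ℝ) - 1) * (b - a) / ((n : ℝ) - 1) with hnodedef
  have hnode : ∀ j : ℕ, node j = a + ((j:ℝ) - 1) * Δ := by
    intro j; rw [hnodedef]; simp only; rw [hΔdef, mul_div_assoc]
  have hnodediff : ∀ i j : ℕ, node j - node i = ((j:ℝ) - (i:ℝ)) * Δ := by
    intro i j; rw [hnode, hnode]; ring
  have hnode1 : node 1 = a := by rw [hnode]; norm_num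
  set p : ℝ → ℝ := fun x => f a + ∑ j ∈ Finset.Ico 1 n,
    (f (node (j+1)) - f (node j)) * pchipPhi ((x - node j) / Δ) with hpdef
  have hp : ContDiff ℝ 1 p := by
    apply ContDiff.add contDiff_const
    apply ContDiff.sum
    intro j _
    exact contDiff_const.mul (pchipPhi_contDiff.comp
      ((contDiff_id.sub contDiff_const).div_const Δ))
  -- key formula on each subinterval
  have key : ∀ k : ℕ, 1 ≤ k → k + 1 ≤ n → ∀ x : ℝ, node k ≤ x → x ≤ node (k+1) →
      p x = f (node k) + (f (node (k+1)) - f (node k)) * pchipPhi ((x - node k)/Δ) := by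
    intro k hk1 hkn x hxl hxr
    have hkn' : k ≤ n := by omega
    have e1 : ∑ j ∈ Finset.Ico 1 k, (f (node (j+1)) - f (node j)) * pchipPhi ((x - node j)/Δ)
        = f (node k) - f (node 1) := by
      have step : ∀ j ∈ Finset.Ico 1 k,
          (f (node (j+1)) - f (node j)) * pchipPhi ((x - node j)/Δ)
          = f (node (j+1)) - f (node j) := by
        intro j hj
        rw [Finset.mem_Ico] at hj
        have hjk : (j:ℝ) + 1 ≤ (k:ℝ) := by exact_mod_cast hj.2
        have hd : node k - node j = ((k:ℝ) - (j:ℝ)) * Δ := hnodediff j k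
        have h1le : (1:ℝ) ≤ (x - node j)/Δ := by
          rw [le_div_iff₀ hΔ]
          nlinarith
        rw [pchipPhi_of_one_le h1le, mul_one]
      rw [Finset.sum_congr rfl step]
      rw [Finset.sum_Ico_eq_sum_range]
      have h2 := Finset.sum_range_sub (fun i => f (node (i+1))) (k-1)
      simp only [Nat.zero_add] at h2
      rw [show k - 1 + 1 = k from by omega] at h2
      rw [← h2]
      apply Finset.sum_congr rfl
      intro i _
      rw [show 1 + i = i + 1 from by omega]
    have e3 : ∑ j ∈ Finset.Ico (k+1) n,
        (f (node (j+1)) - f (node j)) * pchipPhi ((x - node j)/Δ) = 0 := by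
      apply Finset.sum_eq_zero
      intro j hj
      rw [Finset.mem_Ico] at hj
      have hjk : (k:ℝ) + 1 ≤ (j:ℝ) := by exact_mod_cast hj.1
      have hd : node j - node (k+1) = ((j:ℝ) - ((k:ℝ)+1)) * Δ := by
        have := hnodediff (k+1) j
        rw [this]; push_cast; ring
      have hle : (x - node j)/Δ ≤ 0 := by
        apply div_nonpos_of_nonpos_of_nonneg _ hΔ.le
        nlinarith
      rw [pchipPhi_of_nonpos hle, mul_zero]
    have esplit : ∑ j ∈ Finset.Ico 1 n,
        (f (node (j+1)) - f (node j)) * pchipPhi ((x - node j)/Δ)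
        = (∑ j ∈ Finset.Ico 1 k, (f (node (j+1)) - f (node j)) * pchipPhi ((x - node j)/Δ))
        + (f (node (k+1)) - f (node k)) * pchipPhi ((x - node k)/Δ)
        + ∑ j ∈ Finset.Ico (k+1) n,
            (f (node (j+1)) - f (node j)) * pchipPhi ((x - node j)/Δ) := by
      rw [← Finset.sum_Ico_consecutive _ hk1 hkn',
        Finset.sum_eq_sum_Ico_succ_bot (show k < n from by omega)]
      ring
    rw [hpdef]
    simp only
    rw [esplit, e1, e3, hnode1]
    ring
  have humem : ∀ k : ℕ, ∀ x : ℝ, node k ≤ x → x ≤ node (k+1) →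
      0 ≤ (x - node k)/Δ ∧ (x - node k)/Δ ≤ 1 := by
    intro k x hxl hxr
    have hd : node (k+1) - node k = Δ := by
      rw [hnodediff]; push_cast; ring
    constructor
    · exact div_nonneg (by linarith) hΔ.le
    · rw [div_le_one hΔ]; linarith
  have hnodemem : ∀ j : ℕ, 1 ≤ j → j ≤ n → node j ∈ Icc a b := by
    intro j h1 h2
    have hj1 : (1:ℝ) ≤ (j:ℝ) := by exact_mod_cast h1
    have hjn : (j:ℝ) ≤ (n:ℝ) := by exact_mod_cast h2
    rw [hnode]
    constructor
    · nlinarith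
    · nlinarith
  refine ⟨n, p, node, by omega, fun j => rfl, hp.contDiffOn, ?_, ?_, ?_, ?_⟩
  · -- piecewise polynomial
    intro j hj1 hjn
    refine ⟨Polynomial.C (f (node j)) + Polynomial.C (f (node (j+1)) - f (node j)) *
      (3 * (Polynomial.C Δ⁻¹ * (Polynomial.X - Polynomial.C (node j)))^2
        - 2 * (Polynomial.C Δ⁻¹ * (Polynomial.X - Polynomial.C (node j)))^3), ?_, ?_⟩
    · compute_degree
    · intro x hx
      obtain ⟨hu0, hu1⟩ := humem j x hx.1 hx.2
      rw [key j hj1 hjn x hx.1 hx.2, pchipPhi_of_mem hu0 hu1]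
      simp only [Polynomial.eval_add, Polynomial.eval_mul, Polynomial.eval_pow,
        Polynomial.eval_sub, Polynomial.eval_C, Polynomial.eval_X, Polynomial.eval_ofNat]
      rw [div_eq_inv_mul]
  · -- interpolation
    intro j hj1 hjn
    rcases lt_or_eq_of_le hjn with h | h
    · have hd : node (j+1) - node j = Δ := by rw [hnodediff]; push_cast; ring
      have hjj : node j ≤ node (j+1) := by linarith
      rw [key j hj1 (by omega) (node j) le_rfl hjj,
        show (node j - node j)/Δ = 0 from by rw [sub_self, zero_div],
        pchipPhi_of_nonpos le_rfl]
      ring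
    · subst h
      have hd : node ((m+1)+1) - node (m+1) = Δ := by rw [hnodediff]; push_cast; ring
      have hjn' : node (m+1) ≤ node ((m+1)+1) := by linarith
      have hkey := key (m+1) (by omega) (by omega) (node ((m+1)+1)) hjn' le_rfl
      have hu : (node ((m+1)+1) - node (m+1))/Δ = 1 := by rw [hd]; field_simp
      rw [hu, pchipPhi_of_one_le le_rfl] at hkey
      have : (m+1)+1 = n := by omega
      rw [← this]
      rw [hkey]; ring
  · -- bounds
    intro j hj1 hjn x hx
    obtain ⟨hu0, hu1⟩ := humem j x hx.1 hx.2
    rw [key j hj1 hjn x hx.1 hx.2]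
    have hs0 := pchipPhi_nonneg ((x - node j)/Δ)
    have hs1 := pchipPhi_le_one ((x - node j)/Δ)
    set s := pchipPhi ((x - node j)/Δ) with hsdef
    clear_value s
    set A := f (node j) with hA
    clear_value A
    set B := f (node (j+1)) with hB
    clear_value B
    rcases le_total A B with h | h
    · rw [min_eq_left h, max_eq_right h]
      constructor
      · nlinarith [mul_nonneg (sub_nonneg.mpr h) hs0]
      · nlinarith [mul_nonneg (sub_nonneg.mpr h) (sub_nonneg.mpr hs1)]
    · rw [min_eq_right h, max_eq_left h]
      constructor
      · nlinarith [mul_nonneg (sub_nonneg.mpr h) (sub_nonneg.mpr hs1)]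
      · nlinarith [mul_nonneg (sub_nonneg.mpr h) hs0]
  · -- approximation
    intro x hx
    obtain ⟨k, hk1, hkn, hxl, hxr⟩ : ∃ k : ℕ, 1 ≤ k ∧ k + 1 ≤ n ∧ node k ≤ x ∧ x ≤ node (k+1) := by
      set t : ℝ := (x - a)/Δ with htdef
      have ht0 : 0 ≤ t := div_nonneg (by linarith [hx.1]) hΔ.le
      have hfl : ((⌊t⌋.toNat : ℕ) : ℝ) = ((⌊t⌋ : ℤ) : ℝ) := by
        exact_mod_cast congrArg (Int.cast : ℤ → ℝ) (Int.toNat_of_nonneg (Int.floor_nonneg.mpr ht0))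
      have hle : ((⌊t⌋.toNat : ℕ) : ℝ) ≤ t := by rw [hfl]; exact Int.floor_le t
      have hlt : t < ((⌊t⌋.toNat : ℕ) : ℝ) + 1 := by rw [hfl]; exact Int.lt_floor_add_one t
      have hxeq : x = a + t * Δ := by rw [htdef]; field_simp; ring
      by_cases hcase : ⌊t⌋.toNat + 2 ≤ n
      · refine ⟨⌊t⌋.toNat + 1, by omega, by omega, ?_, ?_⟩
        · rw [hnode]; push_cast; nlinarith
        · rw [hnode]; push_cast; nlinarith
      · have hMge : (m:ℝ) + 1 ≤ ((⌊t⌋.toNat : ℕ) : ℝ) := by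
          have : m + 1 ≤ ⌊t⌋.toNat := by omega
          exact_mod_cast this
        have htge : ((n:ℝ) - 1) ≤ t := by rw [hn1]; linarith
        have hxb : b ≤ x := by nlinarith
        have hxb' : x = b := le_antisymm hx.2 hxb
        refine ⟨m+1, by omega, by omega, ?_, ?_⟩
        · rw [hnode, hxb']; push_cast
          have : ((m:ℝ) + 1 - 1) * Δ ≤ ((n:ℝ) - 1) * Δ := by
            apply mul_le_mul_of_nonneg_right _ hΔ.le
            rw [hn1]; linarith
          linarith [hnΔ]
        · have : node (m+1+1) = b := by
            rw [hnode]; push_cast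
            rw [show ((m:ℝ) + 1 + 1 - 1) = (n:ℝ) - 1 from by rw [hn1]; ring]
            linarith [hnΔ]
          rw [this, hxb']
    rw [key k hk1 hkn x hxl hxr]
    have hkmem := hnodemem k hk1 (by omega)
    have hk1mem := hnodemem (k+1) (by omega) hkn
    have hdk : node (k+1) - node k = Δ := by rw [hnodediff]; push_cast; ring
    have hd1 : |f (node (k+1)) - f (node k)| < ε/2 := by
      have := hδ (node (k+1)) hk1mem (node k) hkmem (by rw [Real.dist_eq, hdk, abs_of_pos hΔ]; exact hΔδ)
      rwa [Real.dist_eq] at this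
    have hd2 : |f (node k) - f x| < ε/2 := by
      have := hδ (node k) hkmem x hx (by rw [Real.dist_eq, abs_of_nonpos (by linarith)]; linarith)
      rwa [Real.dist_eq] at this
    have hs0 := pchipPhi_nonneg ((x - node k)/Δ)
    have hs1 := pchipPhi_le_one ((x - node k)/Δ)
    set s := pchipPhi ((x - node k)/Δ)
    have h0 : f (node k) + (f (node (k+1)) - f (node k)) * s - f x
        = (f (node (k+1)) - f (node k)) * s + (f (node k) - f x) := by ring
    rw [h0]
    calc |(f (node (k+1)) - f (node k)) * s + (f (node k) - f x)|
        ≤ |(f (node (k+1)) - f (node k)) * s| + |f (node k) - f x| := abs_add_le _ _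
      _ < ε := by
          rw [abs_mul, abs_of_nonneg hs0]
          nlinarith [abs_nonneg (f (node (k+1)) - f (node k))]
end

section
/- Let x₁ < x₂ be real numbers and set h := x₂ − x₁. Let f₁ ≤ f₂ be real numbers, set Δ := (f₂ − f₁)/h, and let d₁, d₂ be real numbers with 0 ≤ d₁ ≤ 3Δ and 0 ≤ d₂ ≤ 3Δ. Define φ(s) := 3s² − 2s³ and ψ(s) := s³ − s², and define the cubic Hermite polynomial p(x) := f₁ φ((x₂ − x)/h) + f₂ φ((x − x₁)/h) − h d₁ ψ((x₂ − x)/h) + h d₂ ψ((x − x₁)/h). Then p is monotone nondecreasing on [x₁, x₂]; in particular p(x₁) = f₁, p(x₂) = f₂, and f₁ ≤ p(x) ≤ f₂ for all x ∈ [x₁, x₂]. -/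
open Set

lemma aux_fc (A c₁ c₂ t : ℝ) (hA : 0 ≤ A) (h1 : 0 ≤ c₁) (h1' : c₁ ≤ 3*A)
    (h2 : 0 ≤ c₂) (h2' : c₂ ≤ 3*A) (ht : 0 ≤ t) (ht1 : t ≤ 1) :
    0 ≤ 6*A*t*(1-t) + c₁*(1-t)*(1-3*t) + c₂*t*(3*t-2) := by
  rcases eq_or_lt_of_le hA with h|h
  · have e1 : c₁ = 0 := le_antisymm (by linarith) h1
    have e2 : c₂ = 0 := le_antisymm (by linarith) h2
    rw [e1, e2, ← h]
    ring_nf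
    nlinarith [mul_nonneg ht (by linarith : (0:ℝ) ≤ 1 - t)]
  · nlinarith [mul_nonneg (mul_nonneg (mul_nonneg ht (by linarith : (0:ℝ) ≤ 1 - t)) (by linarith : 0 ≤ 3*A - c₁)) (by linarith : 0 ≤ 3*A - c₂),
      mul_nonneg (mul_nonneg (sq_nonneg (1-t)) h1) (by linarith : 0 ≤ 3*A - c₂),
      mul_nonneg (mul_nonneg (sq_nonneg t) (by linarith : 0 ≤ 3*A - c₁)) h2,
      mul_nonneg (mul_nonneg (sq_nonneg (2*t-1)) h1) h2, h]

set_option maxHeartbeats 1000000 in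
/-- Fritsch–Carlson monotonicity: if `f₁ ≤ f₂` and the endpoint slopes satisfy
`0 ≤ d₁, d₂ ≤ 3Δ` with `Δ = (f₂ − f₁)/(x₂ − x₁)`, then the cubic Hermite interpolant
is monotone nondecreasing on `[x₁,x₂]`; in particular it interpolates the endpoint values
and stays between them. -/
theorem stmt_11 (x₁ x₂ f₁ f₂ d₁ d₂ : ℝ) (hx : x₁ < x₂) (hf : f₁ ≤ f₂)
    (hd₁0 : 0 ≤ d₁) (hd₁ : d₁ ≤ 3 * ((f₂ - f₁) / (x₂ - x₁)))
    (hd₂0 : 0 ≤ d₂) (hd₂ : d₂ ≤ 3 * ((f₂ - f₁) / (x₂ - x₁)))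
    (φ ψ p : ℝ → ℝ)
    (hφ : ∀ s : ℝ, φ s = 3 * s ^ 2 - 2 * s ^ 3)
    (hψ : ∀ s : ℝ, ψ s = s ^ 3 - s ^ 2)
    (hp : ∀ x : ℝ, p x =
      f₁ * φ ((x₂ - x) / (x₂ - x₁)) + f₂ * φ ((x - x₁) / (x₂ - x₁)) -
        (x₂ - x₁) * d₁ * ψ ((x₂ - x) / (x₂ - x₁)) +
        (x₂ - x₁) * d₂ * ψ ((x - x₁) / (x₂ - x₁))) :
    MonotoneOn p (Icc x₁ x₂) ∧ p x₁ = f₁ ∧ p x₂ = f₂ ∧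
      ∀ x ∈ Icc x₁ x₂, f₁ ≤ p x ∧ p x ≤ f₂ := by
  have hh : (0:ℝ) < x₂ - x₁ := sub_pos.mpr hx
  have hhne : x₂ - x₁ ≠ 0 := ne_of_gt hh
  set h := x₂ - x₁ with hhdef
  -- explicit polynomial form
  set q : ℝ → ℝ := fun x =>
    f₁ * (3 * ((x₂ - x) / h) ^ 2 - 2 * ((x₂ - x) / h) ^ 3) +
      f₂ * (3 * ((x - x₁) / h) ^ 2 - 2 * ((x - x₁) / h) ^ 3) -
      h * d₁ * (((x₂ - x) / h) ^ 3 - ((x₂ - x) / h) ^ 2) +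
      h * d₂ * (((x - x₁) / h) ^ 3 - ((x - x₁) / h) ^ 2) with hqdef
  have hpq : ∀ x, p x = q x := by
    intro x
    rw [hp, hφ, hφ, hψ, hψ]
  set E : ℝ → ℝ := fun x =>
    (f₂ - f₁) / h * (6 * ((x - x₁) / h) - 6 * ((x - x₁) / h) ^ 2) +
      d₁ * (3 * ((x₂ - x) / h) ^ 2 - 2 * ((x₂ - x) / h)) +
      d₂ * (3 * ((x - x₁) / h) ^ 2 - 2 * ((x - x₁) / h)) with hEdef
  have hderiv : ∀ x : ℝ, HasDerivAt q (E x) x := by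
    intro x
    have hu : HasDerivAt (fun y : ℝ => (x₂ - y) / h) (-1 / h) x :=
      ((hasDerivAt_id x).const_sub x₂).div_const h
    have ht : HasDerivAt (fun y : ℝ => (y - x₁) / h) (1 / h) x :=
      ((hasDerivAt_id x).sub_const x₁).div_const h
    have H := (((((hu.pow 2).const_mul 3).sub ((hu.pow 3).const_mul 2)).const_mul f₁).add
        ((((ht.pow 2).const_mul 3).sub ((ht.pow 3).const_mul 2)).const_mul f₂)).sub
        ((((hu.pow 3).sub (hu.pow 2))).const_mul (h * d₁)) |>.add
        ((((ht.pow 3).sub (ht.pow 2))).const_mul (h * d₂))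
    refine H.congr_deriv ?_
    rw [hEdef]
    simp only
    norm_num
    field_simp
    ring
  have hEnonneg : ∀ x ∈ Icc x₁ x₂, 0 ≤ E x := by
    intro x hx'
    obtain ⟨hx1, hx2⟩ := hx'
    have ht0 : 0 ≤ (x - x₁) / h := div_nonneg (by linarith) hh.le
    have ht1 : (x - x₁) / h ≤ 1 := (div_le_one hh).mpr (by linarith [hhdef])
    have hc1 : h * d₁ ≤ 3 * (f₂ - f₁) := by
      have := mul_le_mul_of_nonneg_left hd₁ hh.le
      calc h * d₁ ≤ h * (3 * ((f₂ - f₁) / h)) := this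
        _ = 3 * (f₂ - f₁) := by field_simp
    have hc2 : h * d₂ ≤ 3 * (f₂ - f₁) := by
      have := mul_le_mul_of_nonneg_left hd₂ hh.le
      calc h * d₂ ≤ h * (3 * ((f₂ - f₁) / h)) := this
        _ = 3 * (f₂ - f₁) := by field_simp
    have key := aux_fc (f₂ - f₁) (h * d₁) (h * d₂) ((x - x₁) / h)
      (by linarith) (by positivity) hc1 (by positivity) hc2 ht0 ht1
    have hueq : (x₂ - x) / h = 1 - (x - x₁) / h := by
      field_simp
      linarith [hhdef]
    have hEm : E x * h =
        6 * (f₂ - f₁) * ((x - x₁) / h) * (1 - (x - x₁) / h) +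
          (h * d₁) * (1 - (x - x₁) / h) * (1 - 3 * ((x - x₁) / h)) +
          (h * d₂) * ((x - x₁) / h) * (3 * ((x - x₁) / h) - 2) := by
      rw [hEdef]
      simp only
      rw [hueq]
      field_simp
      ring
    have h0 : 0 ≤ E x * h := hEm ▸ key
    exact (mul_nonneg_iff_of_pos_right hh).mp h0
  have hmono : MonotoneOn q (Icc x₁ x₂) := by
    apply monotoneOn_of_deriv_nonneg (convex_Icc x₁ x₂)
    · intro x _
      exact (hderiv x).continuousAt.continuousWithinAt
    · intro x _
      exact (hderiv x).differentiableAt.differentiableWithinAt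
    · intro x hx'
      rw [interior_Icc] at hx'
      rw [(hderiv x).deriv]
      exact hEnonneg x ⟨hx'.1.le, hx'.2.le⟩
  have hmp : MonotoneOn p (Icc x₁ x₂) := by
    intro a ha b hb hab
    rw [hpq, hpq]
    exact hmono ha hb hab
  have hp1 : p x₁ = f₁ := by
    rw [hpq, hqdef]
    simp only
    rw [sub_self, zero_div, div_self hhne]
    norm_num
  have hp2 : p x₂ = f₂ := by
    rw [hpq, hqdef]
    simp only
    rw [sub_self, zero_div, div_self hhne]
    norm_num
  refine ⟨hmp, hp1, hp2, fun x hx' => ?_⟩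
  constructor
  · rw [← hp1]; exact hmp ⟨le_refl x₁, hx.le⟩ hx' hx'.1
  · rw [← hp2]; exact hmp hx' ⟨hx.le, le_refl x₂⟩ hx'.2
end

section
/- Let C, k : ℝ → ℝ be continuous with C(θ) > 0 for all θ ∈ ℝ, fix θ̲ ∈ ℝ, define Ĉ(θ) := ∫_{θ̲}^{θ} C(ξ) dξ with range J := Ĉ(ℝ) and inverse Ĉ⁻¹ : J → ℝ, and define α : J → ℝ by α(u) := ∫_{θ̲}^{Ĉ⁻¹(u)} k(ξ) dξ. Let θ : D → ℝ be a function on an open set D ⊆ ℝ², let (t₀,x₀) ∈ D, and assume: the partial derivative ∂_t θ(t₀,x₀) exists; the function x ↦ θ(t₀,x) is differentiable on a neighborhood of x₀; and the function x ↦ k(θ(t₀,x)) ∂_x θ(t₀,x) is differentiable at x₀. Define u(t,x) := Ĉ(θ(t,x)) on D. Then: (1) ∂_t u(t₀,x₀) = C(θ(t₀,x₀)) ∂_t θ(t₀,x₀); (2) ∂_x u(t₀,x) = C(θ(t₀,x)) ∂_x θ(t₀,x) for x near x₀; (3) α'(u(t₀,x)) ∂_x u(t₀,x) = k(θ(t₀,x))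 ∂_x θ(t₀,x) for x near x₀, so that x ↦ α'(u(t₀,x)) ∂_x u(t₀,x) is differentiable at x₀; and (4) the equation C(θ) ∂_t θ = ∂_x ( k(θ) ∂_x θ ) holds at (t₀,x₀) if and only if the equation ∂_t u = ∂_x ( α'(u) ∂_x u ) holds at (t₀,x₀). -/
open Set Filter intervalIntegral

/-- Equivalence of the temperature formulation `C(θ)θ_t = (k(θ)θ_x)_x` and the enthalpy
formulation `u_t = (α'(u)u_x)_x` under the transformation `u = Ĉ(θ)`,
`Ĉ(θ) = ∫_θ̲^θ C`, `α(u) = ∫_θ̲^{Ĉ⁻¹(u)} k`. -/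
theorem stmt_13 (C k : ℝ → ℝ) (hC : Continuous C) (hk : Continuous k)
    (hCpos : ∀ θ : ℝ, 0 < C θ) (θunderline : ℝ)
    (Cinv : ℝ → ℝ)
    (hCinvL : ∀ θ : ℝ, Cinv (∫ ξ in θunderline..θ, C ξ) = θ)
    (hCinvR : ∀ u ∈ Set.range fun θ => ∫ ξ in θunderline..θ, C ξ,
      (∫ ξ in θunderline..(Cinv u), C ξ) = u)
    (θ : ℝ → ℝ → ℝ) (D : Set (ℝ × ℝ)) (hD : IsOpen D) (t₀ x₀ : ℝ) (hmem : (t₀, x₀) ∈ D)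
    (hθt : DifferentiableAt ℝ (fun t => θ t x₀) t₀)
    (hθx : ∀ᶠ x in nhds x₀, DifferentiableAt ℝ (fun y => θ t₀ y) x)
    (hkθx : DifferentiableAt ℝ (fun x => k (θ t₀ x) * deriv (fun y => θ t₀ y) x) x₀)
    (u : ℝ → ℝ → ℝ) (hu : ∀ t x : ℝ, u t x = ∫ ξ in θunderline..(θ t x), C ξ)
    (α : ℝ → ℝ) (hα : ∀ s : ℝ, α s = ∫ ξ in θunderline..(Cinv s), k ξ) :
    deriv (fun t => u t x₀) t₀ = C (θ t₀ x₀) * deriv (fun t => θ t x₀) t₀ ∧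
    (∀ᶠ x in nhds x₀,
      deriv (fun y => u t₀ y) x = C (θ t₀ x) * deriv (fun y => θ t₀ y) x) ∧
    (∀ᶠ x in nhds x₀,
      deriv α (u t₀ x) * deriv (fun y => u t₀ y) x =
        k (θ t₀ x) * deriv (fun y => θ t₀ y) x) ∧
    DifferentiableAt ℝ (fun x => deriv α (u t₀ x) * deriv (fun y => u t₀ y) x) x₀ ∧
    (C (θ t₀ x₀) * deriv (fun t => θ t x₀) t₀ =
        deriv (fun x => k (θ t₀ x) * deriv (fun y => θ t₀ y) x) x₀ ↔
      deriv (fun t => u t x₀) t₀ =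
        deriv (fun x => deriv α (u t₀ x) * deriv (fun y => u t₀ y) x) x₀) := by
  set Chat : ℝ → ℝ := fun s => ∫ ξ in θunderline..s, C ξ with hChat
  -- FTC derivatives
  have hChatD : ∀ y : ℝ, HasDerivAt Chat (C y) y := fun y =>
    intervalIntegral.integral_hasDerivAt_right (hC.intervalIntegrable _ _)
      (hC.stronglyMeasurableAtFilter _ _) hC.continuousAt
  have hF : ∀ y : ℝ, HasDerivAt (fun s => ∫ ξ in θunderline..s, k ξ) (k y) y := fun y =>
    intervalIntegral.integral_hasDerivAt_right (hk.intervalIntegrable _ _)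
      (hk.stronglyMeasurableAtFilter _ _) hk.continuousAt
  have hmono : StrictMono Chat := strictMono_of_deriv_pos fun y => by
    rw [(hChatD y).deriv]; exact hCpos y
  -- eventually-right-inverse near any point of the range
  have hrange : ∀ θ₀ : ℝ, ∀ᶠ v in nhds (Chat θ₀), Chat (Cinv v) = v := by
    intro θ₀
    have hsub : Ioo (Chat (θ₀ - 1)) (Chat (θ₀ + 1)) ⊆ Set.range Chat := by
      intro v hv
      have hcontC : ContinuousOn Chat (Icc (θ₀ - 1) (θ₀ + 1)) :=
        (intervalIntegral.continuous_primitive (fun a b => hC.intervalIntegrable a b)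
          θunderline).continuousOn
      have := intermediate_value_Icc (by linarith : θ₀ - 1 ≤ θ₀ + 1) hcontC
      rcases this (mem_Icc.mpr ⟨le_of_lt hv.1, le_of_lt hv.2⟩) with ⟨w, _, hw⟩
      exact ⟨w, hw⟩
    have hnhds : Ioo (Chat (θ₀ - 1)) (Chat (θ₀ + 1)) ∈ nhds (Chat θ₀) :=
      Ioo_mem_nhds (hmono (by linarith)) (hmono (by linarith))
    filter_upwards [hnhds] with v hv
    exact hCinvR v (hsub hv)
  -- continuity of Cinv at points of the range
  have hcontinv : ∀ θ₀ : ℝ, ContinuousAt Cinv (Chat θ₀) := by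
    intro θ₀
    have : Tendsto Cinv (nhds (Chat θ₀)) (nhds θ₀) := by
      refine tendsto_order.2 ⟨fun a ha => ?_, fun a ha => ?_⟩
      · filter_upwards [hrange θ₀, eventually_gt_nhds (hmono ha)] with v h1 h2
        have : Chat a < Chat (Cinv v) := by rw [h1]; exact h2
        exact hmono.lt_iff_lt.mp this
      · filter_upwards [hrange θ₀, eventually_lt_nhds (hmono ha)] with v h1 h2
        have : Chat (Cinv v) < Chat a := by rw [h1]; exact h2
        exact hmono.lt_iff_lt.mp this
    unfold ContinuousAt
    rwa [hCinvL θ₀]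
  -- derivative of Cinv
  have hCinvD : ∀ θ₀ : ℝ, HasDerivAt Cinv (C θ₀)⁻¹ (Chat θ₀) := by
    intro θ₀
    refine HasDerivAt.of_local_left_inverse (hcontinv θ₀) ?_ (hCpos θ₀).ne' (hrange θ₀)
    rw [hCinvL θ₀]; exact hChatD θ₀
  -- derivative of α
  have hαD : ∀ θ₀ : ℝ, HasDerivAt α (k θ₀ * (C θ₀)⁻¹) (Chat θ₀) := by
    intro θ₀
    have hcomp : HasDerivAt ((fun y => ∫ ξ in θunderline..y, k ξ) ∘ Cinv)
        (k θ₀ * (C θ₀)⁻¹) (Chat θ₀) := by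
      refine HasDerivAt.comp _ ?_ (hCinvD θ₀)
      rw [hCinvL θ₀]; exact hF θ₀
    have : α = fun s => ∫ ξ in θunderline..(Cinv s), k ξ := funext hα
    rw [this]; exact hcomp
  -- rewrite u as Chat ∘ θ
  have hux : (fun y => u t₀ y) = fun y => Chat (θ t₀ y) := funext fun y => hu t₀ y
  have hut : (fun t => u t x₀) = fun t => Chat (θ t x₀) := funext fun t => hu t x₀
  -- part 1
  have p1 : deriv (fun t => u t x₀) t₀ = C (θ t₀ x₀) * deriv (fun t => θ t x₀) t₀ := by
    rw [hut]
    exact (HasDerivAt.comp t₀ (hChatD (θ t₀ x₀)) hθt.hasDerivAt).deriv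
  -- part 2
  have p2 : ∀ᶠ x in nhds x₀,
      deriv (fun y => u t₀ y) x = C (θ t₀ x) * deriv (fun y => θ t₀ y) x := by
    filter_upwards [hθx] with x hx
    rw [hux]
    exact (HasDerivAt.comp x (hChatD (θ t₀ x)) hx.hasDerivAt).deriv
  -- part 3
  have p3 : ∀ᶠ x in nhds x₀,
      deriv α (u t₀ x) * deriv (fun y => u t₀ y) x =
        k (θ t₀ x) * deriv (fun y => θ t₀ y) x := by
    filter_upwards [hθx, p2] with x hx h2
    have hdα : deriv α (u t₀ x) = k (θ t₀ x) * (C (θ t₀ x))⁻¹ := by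
      rw [hu t₀ x]; exact (hαD (θ t₀ x)).deriv
    rw [hdα, h2]
    have hne := (hCpos (θ t₀ x)).ne'
    field_simp
  -- eventual equality of the flux functions
  have heq : (fun x => deriv α (u t₀ x) * deriv (fun y => u t₀ y) x)
      =ᶠ[nhds x₀] (fun x => k (θ t₀ x) * deriv (fun y => θ t₀ y) x) := p3
  refine ⟨p1, p2, p3, hkθx.congr_of_eventuallyEq heq, ?_⟩
  rw [p1, heq.deriv_eq]
end
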